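/- arXiv:1807.01180 — 3 statements merged into one kernel-verified Lean document; each statement's English description precedes it below -/
import Mathlib

section
/- Let T be a tree on n ≥ 2 vertices and let r ≥ 3 be an integer. Then for every real number y, φ(T^r, y²) = y^{(n−2)(r−2)} · μ(T, y^r), where φ(T^r, ·) is the matching polynomial of the r-uniform hypergraph T^r and μ(T, ·) is the matching polynomial of the graph T. -/
open Classical

noncomputable section

/-- A finite hypergraph: a finite vertex set together with a finite set of edges,
each edge being a finite set of vertices. -/
structure FinHypergraph (α : Type*) where
  verts : Finset α
  edges : Finset (Finset α)

namespace FinHypergraph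

variable {α : Type*}

/-- Every edge of `H` is a subset of the vertex set of `H`. -/
def WellFormed (H : FinHypergraph α) : Prop := ∀ e ∈ H.edges, e ⊆ H.verts

/-- `H` is `r`-uniform: every edge has exactly `r` vertices. -/
def Uniform (H : FinHypergraph α) (r : ℕ) : Prop := ∀ e ∈ H.edges, e.card = r

/-- A set of edges is a matching if its members are pairwise disjoint. -/
def IsMatchingSet (M : Finset (Finset α)) : Prop :=
  ∀ e ∈ M, ∀ f ∈ M, e ≠ f → Disjoint e f

/-- `m(H,k)`: the number of matchings of `H` consisting of exactly `k` edges. -/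
noncomputable def matchCount (H : FinHypergraph α) (k : ℕ) : ℕ :=
  (H.edges.powerset.filter (fun M => M.card = k ∧ IsMatchingSet M)).card

/-- The matching polynomial `φ(H,x) = Σ_k (-1)^k m(H,k) x^(n - r·k)` of an
`r`-uniform hypergraph `H` with `n` vertices, evaluated at a real number `x`. -/
noncomputable def matchPoly (H : FinHypergraph α) (r : ℕ) (x : ℝ) : ℝ :=
  ∑ k ∈ Finset.range (H.verts.card + 1),
    (-1 : ℝ) ^ k * (H.matchCount k : ℝ) * x ^ (H.verts.card - r * k)

/-- `H − S`: delete the vertices of `S` and all edges meeting `S`. -/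
def removeVerts (H : FinHypergraph α) (S : Finset α) : FinHypergraph α :=
  ⟨H.verts \ S, H.edges.filter (fun e => Disjoint e S)⟩

end FinHypergraph

/-- `m(G,k)` for a simple graph `G`: the number of sets of `k` pairwise disjoint edges. -/
noncomputable def graphMatchCount {V : Type*} [Fintype V] (G : SimpleGraph V) (k : ℕ) : ℕ :=
  ((Set.toFinite G.edgeSet).toFinset.powerset.filter
    (fun M => M.card = k ∧ ∀ e ∈ M, ∀ f ∈ M, e ≠ f →
      Disjoint (Finset.univ.filter (· ∈ e)) (Finset.univ.filter (· ∈ f)))).card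

/-- The matching polynomial `μ(G,x) = Σ_k (-1)^k m(G,k) x^(n-2k)` of a simple graph `G`
on `n` vertices. -/
noncomputable def graphMatchPoly {V : Type*} [Fintype V] (G : SimpleGraph V) (x : ℝ) : ℝ :=
  ∑ k ∈ Finset.range (Fintype.card V + 1),
    (-1 : ℝ) ^ k * (graphMatchCount G k : ℝ) * x ^ (Fintype.card V - 2 * k)

/-- The `r`-th power hypergraph `G^r` of a simple graph `G`: each edge `e` of `G` is
enlarged by `r - 2` new vertices (distinct for distinct edges) to an `r`-element edge. -/
noncomputable def powerHypergraph {V : Type*} [Fintype V] (G : SimpleGraph V) (r : ℕ) :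
    FinHypergraph (V ⊕ (Sym2 V × Fin (r - 2))) :=
  ⟨(Finset.univ.image Sum.inl) ∪
      (((Set.toFinite G.edgeSet).toFinset ×ˢ (Finset.univ : Finset (Fin (r - 2)))).image
        Sum.inr),
    (Set.toFinite G.edgeSet).toFinset.image (fun e =>
      ((Finset.univ.filter (· ∈ e)).image Sum.inl) ∪
        (Finset.univ.image (fun i : Fin (r - 2) => Sum.inr (e, i))))⟩

/-- For a tree `T` on `n ≥ 2` vertices and `r ≥ 3`,
`φ(T^r, y²) = y^((n−2)(r−2)) · μ(T, y^r)` for every real `y`. -/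
theorem powerHypergraph_matchPoly {V : Type*} [Fintype V] [DecidableEq V]
    (G : SimpleGraph V) (hG : G.IsTree) (hn : 2 ≤ Fintype.card V) (r : ℕ) (hr : 3 ≤ r) :
    ∀ y : ℝ, (powerHypergraph G r).matchPoly r (y ^ 2)
      = y ^ ((Fintype.card V - 2) * (r - 2)) * graphMatchPoly G (y ^ r) := by
  intro y
  set n := Fintype.card V with hn_def
  set E : Finset (Sym2 V) := (Set.toFinite G.edgeSet).toFinset with hE_def
  set enl : Sym2 V → Finset (V ⊕ (Sym2 V × Fin (r - 2))) := fun e =>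
    ((Finset.univ.filter (· ∈ e)).image Sum.inl) ∪
      (Finset.univ.image (fun i : Fin (r - 2) => Sum.inr (e, i))) with henl
  have mem_enl : ∀ (e : Sym2 V) (x : V ⊕ (Sym2 V × Fin (r - 2))),
      x ∈ enl e ↔ (∃ v ∈ e, x = Sum.inl v) ∨ ∃ i, x = Sum.inr (e, i) := by
    intro e x
    simp [henl, eq_comm]
  have enl_inj : Function.Injective enl := by
    intro e f h
    have i0 : Fin (r - 2) := ⟨0, by omega⟩
    have hmem : Sum.inr (e, i0) ∈ enl f := by
      rw [← h]; exact (mem_enl e _).2 (Or.inr ⟨i0, rfl⟩)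
    rcases (mem_enl f _).1 hmem with ⟨v, _, hv⟩ | ⟨i, hi⟩
    · simp at hv
    · exact congrArg Prod.fst (Sum.inr_injective hi)
  -- instance-free characterization of graph-side disjointness
  have key : ∀ (e f : Sym2 V) (h1 : DecidablePred (· ∈ e)) (h2 : DecidablePred (· ∈ f)),
      Disjoint (@Finset.filter V (fun x => x ∈ e) h1 Finset.univ)
        (@Finset.filter V (fun x => x ∈ f) h2 Finset.univ) ↔
        ∀ v : V, v ∈ e → v ∈ f → False := by
    intro e f h1 h2
    rw [Finset.disjoint_left]
    constructor
    · intro h v hv1 hv2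
      exact h (Finset.mem_filter.2 ⟨Finset.mem_univ v, hv1⟩)
        (Finset.mem_filter.2 ⟨Finset.mem_univ v, hv2⟩)
    · intro h v hv1 hv2
      exact h v (Finset.mem_filter.1 hv1).2 (Finset.mem_filter.1 hv2).2
  have disj_iff : ∀ e f : Sym2 V, e ≠ f →
      (Disjoint (enl e) (enl f) ↔ ∀ v : V, v ∈ e → v ∈ f → False) := by
    intro e f hef
    constructor
    · intro h v hv1 hv2
      rw [Finset.disjoint_left] at h
      exact h ((mem_enl e _).2 (Or.inl ⟨v, hv1, rfl⟩))
        ((mem_enl f _).2 (Or.inl ⟨v, hv2, rfl⟩))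
    · intro h
      rw [Finset.disjoint_left]
      intro x hx1 hx2
      rcases (mem_enl e x).1 hx1 with ⟨v, hv, rfl⟩ | ⟨i, rfl⟩
      · rcases (mem_enl f _).1 hx2 with ⟨w, hw, hvw⟩ | ⟨i, hi⟩
        · obtain rfl : v = w := by simpa using hvw
          exact h v hv hw
        · simp at hi
      · rcases (mem_enl f _).1 hx2 with ⟨w, hw, hvw⟩ | ⟨i', hi⟩
        · simp at hvw
        · exact hef (congrArg Prod.fst (Sum.inr_injective hi))
  have hedges : (powerHypergraph G r).edges = E.image enl := by
    ext x
    simp only [powerHypergraph, Finset.mem_image]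
    constructor
    · rintro ⟨e, he, rfl⟩
      exact ⟨e, he, by ext y; simp [henl, eq_comm]⟩
    · rintro ⟨e, he, rfl⟩
      exact ⟨e, he, by ext y; simp [henl, eq_comm]⟩
  -- matching count equality
  have count_eq : ∀ k, (powerHypergraph G r).matchCount k = graphMatchCount G k := by
    intro k
    unfold FinHypergraph.matchCount graphMatchCount
    rw [hedges]
    symm
    apply Finset.card_bij (fun M _ => M.image enl)
    · intro M hM
      simp only [Finset.mem_filter, Finset.mem_powerset] at hM ⊢
      obtain ⟨hsub, hcard, hmatch⟩ := hM
      refine ⟨Finset.image_subset_image hsub, ?_, ?_⟩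
      · rw [Finset.card_image_of_injective _ enl_inj, hcard]
      · intro e' he' f' hf' hne
        obtain ⟨e, heM, rfl⟩ := Finset.mem_image.1 he'
        obtain ⟨f, hfM, rfl⟩ := Finset.mem_image.1 hf'
        have hef : e ≠ f := fun h => hne (by rw [h])
        exact (disj_iff e f hef).2 ((key e f _ _).1 (hmatch e heM f hfM hef))
    · intro M1 h1 M2 h2 h
      exact Finset.image_injective enl_inj h
    · intro M' hM'
      simp only [Finset.mem_filter, Finset.mem_powerset] at hM'
      obtain ⟨hsub, hcard, hmatch⟩ := hM'
      have himg : (E.filter fun e => enl e ∈ M').image enl = M' := by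
        apply Finset.Subset.antisymm
        · intro x hx
          obtain ⟨e, he, rfl⟩ := Finset.mem_image.1 hx
          exact (Finset.mem_filter.1 he).2
        · intro x hx
          obtain ⟨e, heE, rfl⟩ := Finset.mem_image.1 (hsub hx)
          exact Finset.mem_image.2 ⟨e, Finset.mem_filter.2 ⟨heE, hx⟩, rfl⟩
      refine ⟨E.filter (fun e => enl e ∈ M'), ?_, himg⟩
      simp only [Finset.mem_filter, Finset.mem_powerset]
      refine ⟨Finset.filter_subset _ _, ?_, ?_⟩
      · rw [← hcard]
        conv_rhs => rw [← himg]
        rw [Finset.card_image_of_injective _ enl_inj]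
      · intro e he f hf hef
        refine (key e f _ _).2 ((disj_iff e f hef).1
          (hmatch (enl e) ?_ (enl f) ?_ ?_))
        · exact he.2
        · exact hf.2
        · exact fun h => hef (enl_inj h)
  -- number of edges of a tree
  have hEcard : E.card = n - 1 := by
    classical
    have hEF : E = G.edgeFinset := by
      ext e
      rw [hE_def, Set.Finite.mem_toFinset, SimpleGraph.mem_edgeFinset]
    have := hG.card_edgeFinset
    rw [hEF]
    omega
  -- vertex count
  have hN : (powerHypergraph G r).verts.card = n + (n - 1) * (r - 2) := by
    have hv : (powerHypergraph G r).verts =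
        (Finset.univ.image (Sum.inl : V → V ⊕ (Sym2 V × Fin (r - 2)))) ∪
          ((E ×ˢ (Finset.univ : Finset (Fin (r - 2)))).image Sum.inr) := by
      ext x
      simp [powerHypergraph, hE_def]
    rw [hv, Finset.card_union_of_disjoint, Finset.card_image_of_injective _ Sum.inl_injective,
      Finset.card_image_of_injective _ Sum.inr_injective, Finset.card_univ,
      Finset.card_product, Finset.card_univ, Fintype.card_fin, hEcard]
    · rw [Finset.disjoint_left]
      rintro x hx1 hx2
      obtain ⟨v, _, rfl⟩ := Finset.mem_image.1 hx1
      obtain ⟨p, _, h⟩ := Finset.mem_image.1 hx2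
      simp at h
  -- filter cardinality for edges
  have hfilter2 : ∀ (e : Sym2 V), e ∈ G.edgeSet → ∀ (hd : DecidablePred (· ∈ e)),
      (@Finset.filter V (fun x => x ∈ e) hd Finset.univ).card = 2 := by
    intro e
    induction e using Sym2.ind with
    | _ a b =>
      intro heE hd
      have hab : a ≠ b := (G.mem_edgeSet.1 heE).ne
      have hfb : @Finset.filter V (fun x => x ∈ s(a, b)) hd Finset.univ = {a, b} := by
        ext v; simp [Sym2.mem_iff]
      rw [hfb, Finset.card_insert_of_notMem (by simp [hab]), Finset.card_singleton]
  -- bounds when count nonzero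
  have hbound : ∀ k, graphMatchCount G k ≠ 0 → 2 * k ≤ n ∧ k ≤ n - 1 := by
    intro k hk
    unfold graphMatchCount at hk
    obtain ⟨M, hM⟩ := Finset.card_pos.1 (Nat.pos_of_ne_zero hk)
    simp only [Finset.mem_filter, Finset.mem_powerset] at hM
    obtain ⟨hsub, hcard, hmatch⟩ := hM
    have hMedge : ∀ e ∈ M, e ∈ G.edgeSet := by
      intro e heM
      exact (Set.Finite.mem_toFinset _).1 (hsub heM)
    constructor
    · have hdisj : ∀ e ∈ M, ∀ f ∈ M, e ≠ f →
          Disjoint (Finset.univ.filter (· ∈ e)) (Finset.univ.filter (· ∈ f)) := by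
        intro e he f hf hef
        exact (key e f _ _).2 ((key e f _ _).1 (hmatch e he f hf hef))
      calc 2 * k = ∑ e ∈ M, (Finset.univ.filter (· ∈ e)).card := by
            rw [Finset.sum_congr rfl (fun e he => hfilter2 e (hMedge e he) _),
              Finset.sum_const, smul_eq_mul, hcard, Nat.mul_comm]
        _ = (M.biUnion fun e => Finset.univ.filter (· ∈ e)).card :=
            (Finset.card_biUnion hdisj).symm
        _ ≤ n := by
            rw [hn_def, ← Finset.card_univ]
            exact Finset.card_le_card (Finset.subset_univ _)
    · rw [← hcard, ← hEcard]
      exact Finset.card_le_card hsub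
  have hvanish : ∀ k, n < k → graphMatchCount G k = 0 := by
    intro k hk
    by_contra h
    have := (hbound k h).1
    omega
  -- the polynomial identity
  unfold FinHypergraph.matchPoly graphMatchPoly
  rw [hN, ← hn_def, Finset.mul_sum]
  have hle : n + 1 ≤ n + (n - 1) * (r - 2) + 1 := by omega
  rw [Finset.sum_subset (Finset.range_subset_range.2 hle) (by
    intro k hk hk'
    rw [Finset.mem_range, Nat.lt_succ_iff, Nat.not_le] at hk'
    simp [hvanish k hk'])]
  apply Finset.sum_congr rfl
  intro k hk
  rw [count_eq k]
  by_cases h0 : graphMatchCount G k = 0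
  · simp [h0]
  · obtain ⟨h2k, hk1⟩ := hbound k h0
    have hrk : r * k ≤ n + (n - 1) * (r - 2) := by
      have h1 : (r - 2) * k ≤ (r - 2) * (n - 1) := Nat.mul_le_mul_left _ (by omega)
      have h2 : r * k = 2 * k + (r - 2) * k := by
        rw [← Nat.add_mul]; congr 1; omega
      rw [Nat.mul_comm (r - 2) (n - 1)] at h1
      omega
    have hpow : (y ^ 2) ^ (n + (n - 1) * (r - 2) - r * k)
        = y ^ ((n - 2) * (r - 2)) * (y ^ r) ^ (n - 2 * k) := by
      rw [← pow_mul, ← pow_mul, ← pow_add]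
      congr 1
      zify [hrk, h2k, hn, (by omega : 2 ≤ r), (by omega : 1 ≤ n)]
      ring
    rw [hpow]
    ring
end
end

section
/- Let r ≥ 2 and m ≥ 2. The matching polynomials of r-uniform loose paths satisfy the three-term recurrence φ(P_m^r, x) = x^{r−1}·φ(P_{m−1}^r, x) − x^{r−2}·φ(P_{m−2}^r, x), where φ(P_0^r, x) = x and φ(P_1^r, x) = x^r − 1. -/
open Classical

noncomputable section

namespace FinHypergraph

variable {α : Type*}

/-- The edges of the `r`-uniform loose path of length `p` along the vertex labelling `w`:
the `i`-th edge consists of the `r` vertices `w (i*(r-1)), …, w ((i+1)*(r-1))`, so that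
consecutive edges share exactly one vertex. -/
def loosePathEdges (r p : ℕ) (w : ℕ → α) : Finset (Finset α) :=
  (Finset.range p).image (fun i => (Finset.Icc (i * (r - 1)) ((i + 1) * (r - 1))).image w)

/-- `P` is an `r`-uniform loose path with `m` edges (`P_m^r`); for `m = 0` it is a single
vertex with no edge. -/
def IsLoosePath (r m : ℕ) (P : FinHypergraph α) : Prop :=
  ∃ w : ℕ → α, Set.InjOn w (Set.Iic (m * (r - 1))) ∧
    P.verts = (Finset.Icc 0 (m * (r - 1))).image w ∧
    P.edges = loosePathEdges r m w

end FinHypergraph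

open FinHypergraph

open FinHypergraph Finset

namespace LoosePathAux

def nonAdj (p k : ℕ) : Finset (Finset ℕ) :=
  (Finset.range p).powerset.filter
    (fun A => A.card = k ∧ ∀ i ∈ A, ∀ j ∈ A, i ≠ j → (i + 2 ≤ j ∨ j + 2 ≤ i))

noncomputable def g (p k : ℕ) : ℕ := (nonAdj p k).card

lemma nonAdj_zero (p : ℕ) : nonAdj p 0 = {∅} := by
  ext A
  simp only [nonAdj, mem_filter, mem_powerset, mem_singleton, Finset.card_eq_zero]
  constructor
  · rintro ⟨-, h, -⟩; exact h
  · rintro rfl; simp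

lemma g_zero (p : ℕ) : g p 0 = 1 := by simp [g, nonAdj_zero]

lemma g_eq_zero_of_lt {p k : ℕ} (h : p < k) : g p k = 0 := by
  rw [g, Finset.card_eq_zero]
  ext A
  simp only [nonAdj, mem_filter, mem_powerset, Finset.notMem_empty, iff_false, not_and]
  intro hA hc
  exfalso
  have := Finset.card_le_card hA
  rw [hc, Finset.card_range] at this
  omega

lemma g_one_one : g 1 1 = 1 := by
  have : nonAdj 1 1 = {{0}} := by
    ext A
    simp only [nonAdj, mem_filter, mem_powerset, mem_singleton]
    constructor
    · rintro ⟨hA, hc, -⟩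
      have := Finset.eq_of_subset_of_card_le hA (by simp [hc])
      simpa [Finset.range_one] using this
    · rintro rfl
      refine ⟨by simp [Finset.range_one], by simp, ?_⟩
      intro i hi j hj hij
      simp_all
  simp [g, this]

lemma g_rec (p k : ℕ) : g (p + 2) (k + 1) = g (p + 1) (k + 1) + g p k := by
  classical
  rw [g, ← Finset.card_filter_add_card_filter_not
    (p := fun A => (p + 1) ∈ A) (s := nonAdj (p+2) (k+1))]
  have h1 : ((nonAdj (p+2) (k+1)).filter (fun A => ¬ (p + 1) ∈ A)) = nonAdj (p+1) (k+1) := by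
    ext A
    simp only [nonAdj, mem_filter, mem_powerset]
    constructor
    · rintro ⟨⟨hA, hc, hadj⟩, hnm⟩
      refine ⟨?_, hc, hadj⟩
      intro i hi
      have := hA hi
      simp only [mem_range] at this ⊢
      rcases Nat.lt_or_ge i (p+1) with h | h
      · exact h
      · exfalso; have : i = p + 1 := by omega
        exact hnm (this ▸ hi)
    · rintro ⟨hA, hc, hadj⟩
      refine ⟨⟨fun i hi => by have := hA hi; simp only [mem_range] at this ⊢; omega, hc, hadj⟩, ?_⟩
      intro hmem
      have := hA hmem; simp at this
  have h2 : ((nonAdj (p+2) (k+1)).filter (fun A => (p + 1) ∈ A)).card = g p k := by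
    rw [g]
    apply Finset.card_bij (fun A _ => A.erase (p+1))
    · rintro A hA
      simp only [nonAdj, mem_filter, mem_powerset] at hA ⊢
      obtain ⟨⟨hsub, hc, hadj⟩, hm⟩ := hA
      refine ⟨?_, ?_, ?_⟩
      · intro i hi
        have hi' := Finset.mem_of_mem_erase hi
        have hne := Finset.ne_of_mem_erase hi
        have := hadj i hi' (p+1) hm hne
        have hlt := hsub hi'
        simp only [mem_range] at hlt ⊢
        omega
      · simp [Finset.card_erase_of_mem hm, hc]
      · intro i hi j hj hij
        exact hadj i (Finset.mem_of_mem_erase hi) j (Finset.mem_of_mem_erase hj) hij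
    · rintro A hA B hB h
      simp only [nonAdj, mem_filter] at hA hB
      have hA' := hA.2; have hB' := hB.2
      rw [← Finset.insert_erase hA', ← Finset.insert_erase hB', h]
    · rintro B hB
      simp only [nonAdj, mem_filter, mem_powerset] at hB
      obtain ⟨hsub, hc, hadj⟩ := hB
      have hnm : (p+1) ∉ B := by
        intro h; have := hsub h; simp at this
      refine ⟨insert (p+1) B, ?_, ?_⟩
      · simp only [nonAdj, mem_filter, mem_powerset]
        refine ⟨⟨?_, ?_, ?_⟩, Finset.mem_insert_self _ _⟩
        · intro i hi
          rcases Finset.mem_insert.mp hi with rfl | hi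
          · simp
          · have := hsub hi; simp only [mem_range] at this ⊢; omega
        · rw [Finset.card_insert_of_notMem hnm, hc]
        · intro i hi j hj hij
          rcases Finset.mem_insert.mp hi with rfl | hi <;>
            rcases Finset.mem_insert.mp hj with rfl | hj
          · omega
          · have := hsub hj; simp only [mem_range] at this; omega
          · have := hsub hi; simp only [mem_range] at this; omega
          · exact hadj i hi j hj hij
      · rw [Finset.erase_insert hnm]
  rw [h1, h2, Nat.add_comm]
  simp [g]

lemma g_vanish : ∀ p k, p + 2 ≤ 2 * k → g p k = 0
  | 0, k, h => g_eq_zero_of_lt (by omega)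
  | 1, k, h => g_eq_zero_of_lt (by omega)
  | (p+2), 0, h => by omega
  | (p+2), (k+1), h => by
      rw [g_rec, g_vanish (p+1) (k+1) (by omega), g_vanish p k (by omega)]

lemma rk_le' (s : ℕ) {p k : ℕ} (h : 2 * k ≤ p + 1) : (s + 2) * k ≤ p * (s + 1) + 1 := by
  rcases Nat.eq_zero_or_pos k with rfl | hk
  · simp
  · have hp : 1 ≤ p := by omega
    have key : (s + 2) * k * 2 ≤ (p * (s + 1) + 1) * 2 := by
      have h1 : s * (2 * k) ≤ s * p + s := by
        calc s * (2 * k) ≤ s * (p + 1) := Nat.mul_le_mul_left s h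
          _ = s * p + s := by ring
      have h2 : s ≤ s * p := Nat.le_mul_of_pos_right s hp
      have e1 : (s + 2) * k * 2 = s * (2 * k) + 4 * k := by ring
      have e2 : (p * (s + 1) + 1) * 2 = s * p + s * p + 2 * p + 2 := by ring
      rw [e1, e2]
      linarith [h1, h2, h]
    exact Nat.le_of_mul_le_mul_right key (by norm_num)

variable {α : Type*}

lemma verts_card {r p : ℕ} {P : FinHypergraph α} (hP : IsLoosePath r p P) :
    P.verts.card = p * (r - 1) + 1 := by
  obtain ⟨w, hw, hv, -⟩ := hP
  rw [hv, Finset.card_image_of_injOn (hw.mono (by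
    intro a ha
    simp only [Finset.coe_Icc, Set.mem_Icc] at ha
    exact Set.mem_Iic.mpr ha.2)), Nat.card_Icc]
  simp

lemma matchCount_eq {r p : ℕ} (hr : 2 ≤ r) {P : FinHypergraph α} (hP : IsLoosePath r p P)
    (k : ℕ) : P.matchCount k = g p k := by
  classical
  obtain ⟨w, hw, hv, he⟩ := hP
  set E : ℕ → Finset α := fun i => (Finset.Icc (i * (r-1)) ((i+1) * (r-1))).image w with hE
  have he' : P.edges = (Finset.range p).image E := he
  have hr1 : 0 < r - 1 := by omega
  have hbd : ∀ {i v : ℕ}, i < p → v ∈ Finset.Icc (i*(r-1)) ((i+1)*(r-1)) → v ≤ p * (r-1) := by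
    intro i v hi hv2
    rw [Finset.mem_Icc] at hv2
    calc v ≤ (i+1)*(r-1) := hv2.2
      _ ≤ p*(r-1) := Nat.mul_le_mul_right _ hi
  have hwinj : ∀ {i j a b : ℕ}, i < p → j < p → a ∈ Finset.Icc (i*(r-1)) ((i+1)*(r-1)) →
      b ∈ Finset.Icc (j*(r-1)) ((j+1)*(r-1)) → w a = w b → a = b := by
    intro i j a b hi hj ha hb hab
    exact hw (Set.mem_Iic.mpr (hbd hi ha)) (Set.mem_Iic.mpr (hbd hj hb)) hab
  have hself : ∀ i : ℕ, i * (r-1) ∈ Finset.Icc (i*(r-1)) ((i+1)*(r-1)) :=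
    fun i => Finset.mem_Icc.mpr ⟨le_refl _, Nat.mul_le_mul_right _ (by omega)⟩
  have hmemE : ∀ i, w (i * (r-1)) ∈ E i := fun i => Finset.mem_image_of_mem w (hself i)
  have hEinj : ∀ {i j : ℕ}, i < p → j < p → E i = E j → i = j := by
    have key : ∀ {i j : ℕ}, i < p → j < p → i < j → E i ≠ E j := by
      intro i j hi hj hlt heq
      have h1 : w (i * (r-1)) ∈ E j := heq ▸ hmemE i
      obtain ⟨b, hb, hwb⟩ := Finset.mem_image.mp h1
      have hib : i * (r-1) = b := hwinj hi hj (hself i) hb hwb.symm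
      rw [Finset.mem_Icc] at hb
      have hmul : i * (r-1) < j * (r-1) := Nat.mul_lt_mul_of_pos_right hlt hr1
      omega
    intro i j hi hj hij
    by_contra hne
    rcases Nat.lt_or_ge i j with h | h
    · exact key hi hj h hij
    · exact key hj hi (by omega) hij.symm
  have hdisj : ∀ {i j : ℕ}, i < p → j < p → (i + 2 ≤ j ∨ j + 2 ≤ i) → Disjoint (E i) (E j) := by
    have key : ∀ {i j : ℕ}, i < p → j < p → i + 2 ≤ j → Disjoint (E i) (E j) := by
      intro i j hi hj hij
      rw [Finset.disjoint_left]
      intro a hai haj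
      obtain ⟨u, hu, hwu⟩ := Finset.mem_image.mp hai
      obtain ⟨v, hv2, hwv⟩ := Finset.mem_image.mp haj
      have huv : u = v := hwinj hi hj hu hv2 (hwu.trans hwv.symm)
      rw [Finset.mem_Icc] at hu hv2
      have h1 : (i+1)*(r-1) < j*(r-1) := Nat.mul_lt_mul_of_pos_right (by omega) hr1
      omega
    intro i j hi hj h
    rcases h with h | h
    · exact key hi hj h
    · exact (key hj hi h).symm
  have hnotdisj : ∀ {i j : ℕ}, i < p → j < p → ¬(i + 2 ≤ j ∨ j + 2 ≤ i) →
      ¬ Disjoint (E i) (E j) := by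
    intro i j hi hj h hd
    have hMi : w ((max i j) * (r-1)) ∈ E i := by
      apply Finset.mem_image_of_mem
      rw [Finset.mem_Icc]
      have h2 : max i j ≤ i + 1 := by
        rcases max_cases i j with ⟨hm, -⟩ | ⟨hm, -⟩ <;> omega
      exact ⟨Nat.mul_le_mul_right _ (le_max_left i j), Nat.mul_le_mul_right _ h2⟩
    have hMj : w ((max i j) * (r-1)) ∈ E j := by
      apply Finset.mem_image_of_mem
      rw [Finset.mem_Icc]
      have h2 : max i j ≤ j + 1 := by
        rcases max_cases i j with ⟨hm, -⟩ | ⟨hm, -⟩ <;> omega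
      exact ⟨Nat.mul_le_mul_right _ (le_max_right i j), Nat.mul_le_mul_right _ h2⟩
    exact Finset.disjoint_left.mp hd hMi hMj
  have hgoal : (P.edges.powerset.filter (fun M => M.card = k ∧ IsMatchingSet M)).card
      = (nonAdj p k).card := by
    symm
    apply Finset.card_bij (fun A _ => A.image E)
    · intro A hA
      simp only [nonAdj, Finset.mem_filter, Finset.mem_powerset] at hA
      obtain ⟨hsub, hc, hadj⟩ := hA
      rw [Finset.mem_filter, Finset.mem_powerset]
      have hinj : Set.InjOn E ↑A := by
        intro i hi j hj hij
        exact hEinj (Finset.mem_range.mp (hsub hi)) (Finset.mem_range.mp (hsub hj)) hij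
      refine ⟨?_, ?_, ?_⟩
      · rw [he']; exact Finset.image_subset_image hsub
      · rw [Finset.card_image_of_injOn hinj, hc]
      · intro e hef f hff hne
        obtain ⟨i, hi, rfl⟩ := Finset.mem_image.mp hef
        obtain ⟨j, hj, rfl⟩ := Finset.mem_image.mp hff
        have hij : i ≠ j := fun h => hne (by rw [h])
        exact hdisj (Finset.mem_range.mp (hsub hi)) (Finset.mem_range.mp (hsub hj))
          (hadj i hi j hj hij)
    · intro A hA B hB hAB
      simp only [nonAdj, Finset.mem_filter, Finset.mem_powerset] at hA hB
      ext i
      constructor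
      · intro hi
        have h1 : E i ∈ B.image E := hAB ▸ Finset.mem_image_of_mem E hi
        obtain ⟨j, hj, hji⟩ := Finset.mem_image.mp h1
        rwa [hEinj (Finset.mem_range.mp (hB.1 hj)) (Finset.mem_range.mp (hA.1 hi)) hji] at hj
      · intro hi
        have h1 : E i ∈ A.image E := hAB ▸ Finset.mem_image_of_mem E hi
        obtain ⟨j, hj, hji⟩ := Finset.mem_image.mp h1
        rwa [hEinj (Finset.mem_range.mp (hA.1 hj)) (Finset.mem_range.mp (hB.1 hi)) hji] at hj
    · intro M hM
      rw [Finset.mem_filter, Finset.mem_powerset, he'] at hM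
      obtain ⟨hsub, hc, hmatch⟩ := hM
      have himg : ((Finset.range p).filter (fun i => E i ∈ M)).image E = M := by
        apply Finset.Subset.antisymm
        · intro e he2
          obtain ⟨i, hi, rfl⟩ := Finset.mem_image.mp he2
          exact (Finset.mem_filter.mp hi).2
        · intro e heM
          obtain ⟨i, hi, rfl⟩ := Finset.mem_image.mp (hsub heM)
          exact Finset.mem_image_of_mem E (Finset.mem_filter.mpr ⟨hi, heM⟩)
      have hinj : Set.InjOn E ↑((Finset.range p).filter (fun i => E i ∈ M)) := by
        intro i hi j hj hij
        simp only [Finset.coe_filter, Set.mem_setOf_eq, Finset.mem_range] at hi hj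
        exact hEinj hi.1 hj.1 hij
      refine ⟨(Finset.range p).filter (fun i => E i ∈ M), ?_, himg⟩
      simp only [nonAdj, Finset.mem_filter, Finset.mem_powerset]
      refine ⟨Finset.filter_subset _ _, ?_, ?_⟩
      · rw [← Finset.card_image_of_injOn hinj, himg, hc]
      · intro i hi j hj hij
        have hi' := hi
        have hj' := hj
        have hEne : E i ≠ E j := fun h =>
          hij (hEinj (Finset.mem_range.mp hi'.1) (Finset.mem_range.mp hj'.1) h)
        have hd := hmatch _ hi'.2 _ hj'.2 hEne
        by_contra hcon
        exact hnotdisj (Finset.mem_range.mp hi'.1) (Finset.mem_range.mp hj'.1) hcon hd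
  rw [FinHypergraph.matchCount, hgoal, g]

lemma matchPoly_formula {r p : ℕ} (hr : 2 ≤ r) {P : FinHypergraph α} (hP : IsLoosePath r p P)
    (x : ℝ) : P.matchPoly r x
      = ∑ k ∈ Finset.range (p + 1),
          (-1 : ℝ) ^ k * (g p k : ℝ) * x ^ (p * (r - 1) + 1 - r * k) := by
  rw [FinHypergraph.matchPoly, verts_card hP]
  rw [Finset.sum_congr rfl (fun k _ => by rw [matchCount_eq hr hP k])]
  symm
  apply Finset.sum_subset
  · intro k hk
    rw [Finset.mem_range] at hk ⊢
    have : p ≤ p * (r - 1) := Nat.le_mul_of_pos_right p (by omega)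
    omega
  · intro k hk hnk
    rw [Finset.mem_range] at hk hnk
    rw [g_eq_zero_of_lt (by omega)]
    simp

end LoosePathAux

namespace LoosePathAux

lemma key_sum (s m' : ℕ) (x : ℝ) :
    ∑ k ∈ Finset.range (m' + 2 + 1),
        (-1 : ℝ) ^ k * (g (m' + 2) k : ℝ) * x ^ ((m' + 2) * (s + 1) + 1 - (s + 2) * k)
      = x ^ (s + 1) * ∑ k ∈ Finset.range (m' + 1 + 1),
          (-1 : ℝ) ^ k * (g (m' + 1) k : ℝ) * x ^ ((m' + 1) * (s + 1) + 1 - (s + 2) * k)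
        - x ^ s * ∑ k ∈ Finset.range (m' + 1),
          (-1 : ℝ) ^ k * (g m' k : ℝ) * x ^ (m' * (s + 1) + 1 - (s + 2) * k) := by
  have hsplit : ∀ k ∈ Finset.range (m' + 2 + 1),
      (-1 : ℝ) ^ k * (g (m' + 2) k : ℝ) * x ^ ((m' + 2) * (s + 1) + 1 - (s + 2) * k)
      = (-1 : ℝ) ^ k * (g (m' + 1) k : ℝ) * x ^ ((m' + 2) * (s + 1) + 1 - (s + 2) * k)
        + (-1 : ℝ) ^ k * (if k = 0 then (0:ℝ) else (g m' (k - 1) : ℝ))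
            * x ^ ((m' + 2) * (s + 1) + 1 - (s + 2) * k) := by
    intro k _
    cases k with
    | zero => simp [g_zero]
    | succ j =>
        rw [g_rec]
        simp only [Nat.succ_ne_zero, if_false, Nat.add_sub_cancel]
        push_cast
        ring
  rw [Finset.sum_congr rfl hsplit, Finset.sum_add_distrib, sub_eq_add_neg]
  congr 1
  · rw [Finset.sum_range_succ, g_eq_zero_of_lt (show m' + 1 < m' + 2 by omega)]
    push_cast
    rw [mul_zero, zero_mul, add_zero, Finset.mul_sum]
    refine Finset.sum_congr rfl ?_
    intro k hk
    rcases Nat.eq_zero_or_pos (g (m' + 1) k) with hg | hg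
    · simp [hg]
    · have h2k : 2 * k ≤ m' + 2 := by
        by_contra hcon
        have := g_vanish (m' + 1) k (by omega)
        omega
      have hrk : (s + 2) * k ≤ (m' + 1) * (s + 1) + 1 := rk_le' s (by omega)
      rw [show (m' + 2) * (s + 1) + 1 - (s + 2) * k
            = (s + 1) + ((m' + 1) * (s + 1) + 1 - (s + 2) * k) from by
          rw [show (m' + 2) * (s + 1) + 1 = (s + 1) + ((m' + 1) * (s + 1) + 1) from by ring,
            Nat.add_sub_assoc hrk]]
      rw [pow_add]
      ring
  · rw [Finset.sum_range_succ']
    have hzero : ((-1:ℝ)) ^ 0 * (if (0:ℕ) = 0 then (0:ℝ) else (g m' (0-1) : ℝ))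
        * x ^ ((m' + 2) * (s + 1) + 1 - (s + 2) * 0) = 0 := by simp
    rw [hzero, add_zero]
    have hterm : ∀ k ∈ Finset.range (m' + 2),
        (-1:ℝ) ^ (k+1) * (if k + 1 = 0 then (0:ℝ) else (g m' (k + 1 - 1) : ℝ))
          * x ^ ((m' + 2) * (s + 1) + 1 - (s + 2) * (k + 1))
        = (-1:ℝ) ^ (k+1) * (g m' k : ℝ) * x ^ ((m' + 2) * (s + 1) + 1 - (s + 2) * (k + 1)) := by
      intro k _
      simp
    rw [Finset.sum_congr rfl hterm]
    rw [Finset.sum_range_succ, g_eq_zero_of_lt (show m' < m' + 1 by omega)]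
    push_cast
    rw [mul_zero, zero_mul, add_zero, Finset.mul_sum, ← Finset.sum_neg_distrib]
    refine Finset.sum_congr rfl ?_
    intro k hk
    rcases Nat.eq_zero_or_pos (g m' k) with hg | hg
    · simp [hg]
    · have h2k : 2 * k ≤ m' + 1 := by
        by_contra hcon
        have := g_vanish m' k (by omega)
        omega
      have hrk : (s + 2) * k ≤ m' * (s + 1) + 1 := rk_le' s h2k
      rw [show (m' + 2) * (s + 1) + 1 - (s + 2) * (k + 1)
            = s + (m' * (s + 1) + 1 - (s + 2) * k) from by
          rw [show (s + 2) * (k + 1) = (s + 2) * k + (s + 2) from by ring,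
            show (m' + 2) * (s + 1) + 1 = (s + (m' * (s + 1) + 1)) + (s + 2) from by ring,
            Nat.add_sub_add_right, Nat.add_sub_assoc hrk]]
      rw [pow_add]
      ring

end LoosePathAux


open LoosePathAux

/-- For `r ≥ 2` and `m ≥ 2`, the matching polynomials of `r`-uniform
loose paths satisfy `φ(P_m^r, x) = x^(r−1)·φ(P_{m−1}^r, x) − x^(r−2)·φ(P_{m−2}^r, x)`,
with `φ(P_0^r, x) = x` and `φ(P_1^r, x) = x^r − 1`. -/
theorem loosePath_matchPoly_recurrence {α : Type*} (r m : ℕ) (hr : 2 ≤ r) (hm : 2 ≤ m)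
    (Pm Pm1 Pm2 P0 P1 : FinHypergraph α)
    (hPm : IsLoosePath r m Pm) (hPm1 : IsLoosePath r (m - 1) Pm1)
    (hPm2 : IsLoosePath r (m - 2) Pm2)
    (hP0 : IsLoosePath r 0 P0) (hP1 : IsLoosePath r 1 P1) :
    (∀ x : ℝ, Pm.matchPoly r x
        = x ^ (r - 1) * Pm1.matchPoly r x - x ^ (r - 2) * Pm2.matchPoly r x) ∧
    (∀ x : ℝ, P0.matchPoly r x = x) ∧
    (∀ x : ℝ, P1.matchPoly r x = x ^ r - 1) := by
  obtain ⟨s, rfl⟩ : ∃ s, r = s + 2 := ⟨r - 2, by omega⟩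
  obtain ⟨m', rfl⟩ : ∃ m', m = m' + 2 := ⟨m - 2, by omega⟩
  have hPm1' : IsLoosePath (s + 2) (m' + 1) Pm1 := by
    have h : m' + 2 - 1 = m' + 1 := by omega
    rwa [h] at hPm1
  have hPm2' : IsLoosePath (s + 2) m' Pm2 := by
    have h : m' + 2 - 2 = m' := by omega
    rwa [h] at hPm2
  have hs1 : s + 2 - 1 = s + 1 := by omega
  have hs2 : s + 2 - 2 = s := by omega
  refine ⟨?_, ?_, ?_⟩
  · intro x
    rw [matchPoly_formula hr hPm x, matchPoly_formula hr hPm1' x,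
      matchPoly_formula hr hPm2' x, hs1, hs2]
    exact key_sum s m' x
  · intro x
    rw [matchPoly_formula hr hP0 x]
    simp [g_zero]
  · intro x
    rw [matchPoly_formula hr hP1 x, hs1]
    rw [Finset.sum_range_succ, Finset.sum_range_one, g_zero, g_one_one]
    have e0 : 1 * (s + 1) + 1 - (s + 2) * 0 = s + 2 := by omega
    have e1 : 1 * (s + 1) + 1 - (s + 2) * 1 = 0 := by omega
    rw [e0, e1]
    norm_num
    ring
end
end

section
/- Let r ≥ 2, let T be an r-uniform supertree, let v be a vertex of T, and let p ≥ q ≥ 1 be integers. Then φ(T(v;p,q), x) − φ(T(v;p+1,q−1), x) = x^{q(r−2)} · ( φ(T(v;p−q,0), x) − φ((T−v) ∪ P_{p−q}^r, x) ), where (T−v) ∪ P_{p−q}^r denotes the disjoint union of T−v with a loose path of length p−q (a single isolated vertex when p = q). -/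
open Classical

noncomputable section

namespace FinHypergraph

variable {α : Type*}

/-- The disjoint union of two hypergraphs (on disjoint vertex sets). -/
def disjUnion (G H : FinHypergraph α) : FinHypergraph α :=
  ⟨G.verts ∪ H.verts, G.edges ∪ H.edges⟩

/-- `H` is connected: nonempty vertex set, and any two vertices are linked by a chain of
vertices successively lying in a common edge. -/
def Connected (H : FinHypergraph α) : Prop :=
  H.verts.Nonempty ∧ ∀ u ∈ H.verts, ∀ v ∈ H.verts,
    Relation.ReflTransGen (fun a b => ∃ e ∈ H.edges, a ∈ e ∧ b ∈ e) u v

/-- `H` has a cycle: an alternating sequence `v_0 e_0 v_1 e_1 … v_{ℓ-1} e_{ℓ-1} v_0`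
(with `ℓ ≥ 2`) of distinct vertices and distinct edges such that consecutive vertices lie
in the intermediate edge. -/
def HasCycle (H : FinHypergraph α) : Prop :=
  ∃ (ℓ : ℕ) (v : ℕ → α) (e : ℕ → Finset α), 2 ≤ ℓ ∧
    Set.InjOn v (Set.Iio ℓ) ∧ Set.InjOn e (Set.Iio ℓ) ∧
    ∀ i < ℓ, e i ∈ H.edges ∧ v i ∈ e i ∧ v ((i + 1) % ℓ) ∈ e i

/-- An `r`-uniform supertree: a connected acyclic `r`-uniform hypergraph. -/
def IsSupertree (H : FinHypergraph α) (r : ℕ) : Prop :=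
  H.WellFormed ∧ H.Uniform r ∧ H.Connected ∧ ¬ H.HasCycle

/-- `T'` is obtained from `T` by attaching a pendant path of length `p` at the vertex `v`:
a loose path of length `p`, all of whose vertices other than its first joint vertex are
new, is glued to `T` by identifying its first joint vertex with `v`. -/
def IsPendantPathAttach (r : ℕ) (T : FinHypergraph α) (v : α) (p : ℕ) (T' : FinHypergraph α) : Prop :=
  v ∈ T.verts ∧ ∃ w : ℕ → α, w 0 = v ∧
    Set.InjOn w (Set.Iic (p * (r - 1))) ∧
    (∀ j, 1 ≤ j → j ≤ p * (r - 1) → w j ∉ T.verts) ∧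
    T'.verts = T.verts ∪ (Finset.Icc 1 (p * (r - 1))).image w ∧
    T'.edges = T.edges ∪ loosePathEdges r p w

/-- `T'` is `T(v;p,q)`: obtained from `T` by attaching two pendant paths of lengths `p`
and `q` at the vertex `v`. -/
def IsTwoPathAttach (r : ℕ) (T : FinHypergraph α) (v : α) (p q : ℕ) (T' : FinHypergraph α) : Prop :=
  ∃ T1 : FinHypergraph α, IsPendantPathAttach r T v p T1 ∧ IsPendantPathAttach r T1 v q T'

end FinHypergraph

namespace FinHypergraph

variable {α : Type*}

theorem ext' {G H : FinHypergraph α} (hv : G.verts = H.verts) (he : G.edges = H.edges) :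
    G = H := by cases G; cases H; simp_all

/-- The set of all matchings of `H`. -/
noncomputable def mset (H : FinHypergraph α) : Finset (Finset (Finset α)) :=
  H.edges.powerset.filter IsMatchingSet

lemma mem_mset {H : FinHypergraph α} {M : Finset (Finset α)} :
    M ∈ H.mset ↔ M ⊆ H.edges ∧ IsMatchingSet M := by
  simp [mset, Finset.mem_filter, Finset.mem_powerset]

lemma isMatchingSet_subset {M N : Finset (Finset α)} (h : IsMatchingSet M) (hs : N ⊆ M) :
    IsMatchingSet N := fun e he f hf hne => h e (hs he) f (hs hf) hne

lemma mset_bound {H : FinHypergraph α} {r : ℕ} (hwf : H.WellFormed) (hu : H.Uniform r)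
    {M : Finset (Finset α)} (hM : M ∈ H.mset) : r * M.card ≤ H.verts.card := by
  classical
  rw [mem_mset] at hM
  obtain ⟨hsub, hmatch⟩ := hM
  have hcard : (M.biUnion id).card = ∑ e ∈ M, e.card :=
    Finset.card_biUnion hmatch
  have hsum : ∑ e ∈ M, e.card = r * M.card := by
    rw [Finset.sum_congr rfl (fun e he => hu e (hsub he)), Finset.sum_const, smul_eq_mul,
      mul_comm]
  have hsubV : M.biUnion id ⊆ H.verts := by
    intro a ha
    rw [Finset.mem_biUnion] at ha
    obtain ⟨e, he, hae⟩ := ha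
    exact hwf e (hsub he) hae
  calc r * M.card = (M.biUnion id).card := by rw [hcard, hsum]
    _ ≤ H.verts.card := Finset.card_le_card hsubV

lemma matchPoly_eq_sum {H : FinHypergraph α} {r : ℕ} (hr : 1 ≤ r) (hwf : H.WellFormed)
    (hu : H.Uniform r) (x : ℝ) :
    H.matchPoly r x = ∑ M ∈ H.mset, (-1 : ℝ) ^ M.card * x ^ (H.verts.card - r * M.card) := by
  classical
  unfold matchPoly
  rw [← Finset.sum_fiberwise_of_maps_to (g := fun M : Finset (Finset α) => M.card)
    (t := Finset.range (H.verts.card + 1))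
    (fun M hM => by
      rw [Finset.mem_range]
      show M.card < H.verts.card + 1
      have h1 := mset_bound hwf hu hM
      have h2 : M.card ≤ r * M.card := Nat.le_mul_of_pos_left _ hr
      omega)]
  refine Finset.sum_congr rfl fun k hk => ?_
  have : (H.mset.filter (fun M => M.card = k)) =
      H.edges.powerset.filter (fun M => M.card = k ∧ IsMatchingSet M) := by
    rw [mset, Finset.filter_filter]
    exact Finset.filter_congr fun M hM => by tauto
  rw [Finset.sum_congr rfl (g := fun M => (-1:ℝ)^k * x ^ (H.verts.card - r * k))
    (fun M hM => by rw [Finset.mem_filter] at hM; rw [hM.2]),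
    Finset.sum_const, this, matchCount]
  push_cast
  ring

lemma removeVerts_wellFormed {H : FinHypergraph α} (hwf : H.WellFormed) (S : Finset α) :
    (H.removeVerts S).WellFormed := by
  intro e he
  rw [removeVerts, Finset.mem_filter] at he
  intro a ha
  simp only [removeVerts, Finset.mem_sdiff]
  exact ⟨hwf e he.1 ha, fun haS => (Finset.disjoint_left.mp he.2 ha) haS⟩

lemma removeVerts_uniform {H : FinHypergraph α} {r : ℕ} (hu : H.Uniform r) (S : Finset α) :
    (H.removeVerts S).Uniform r := by
  intro e he
  rw [removeVerts, Finset.mem_filter] at he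
  exact hu e he.1

lemma disjUnion_wellFormed {G H : FinHypergraph α} (hG : G.WellFormed) (hH : H.WellFormed) :
    (G.disjUnion H).WellFormed := by
  intro e he
  rw [disjUnion, Finset.mem_union] at he
  rcases he with h | h
  · exact (hG e h).trans Finset.subset_union_left
  · exact (hH e h).trans Finset.subset_union_right

lemma disjUnion_uniform {G H : FinHypergraph α} {r : ℕ} (hG : G.Uniform r) (hH : H.Uniform r) :
    (G.disjUnion H).Uniform r := by
  intro e he
  rw [disjUnion, Finset.mem_union] at he
  rcases he with h | h
  · exact hG e h
  · exact hH e h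

lemma matchPoly_edgeless {H : FinHypergraph α} (h : H.edges = ∅) (r : ℕ) (x : ℝ) :
    H.matchPoly r x = x ^ H.verts.card := by
  classical
  have hcount : ∀ k, H.matchCount k = if k = 0 then 1 else 0 := by
    intro k
    rw [matchCount, h]
    rcases Nat.eq_zero_or_pos k with hk | hk
    · subst hk
      rw [if_pos rfl, Finset.card_eq_one]
      refine ⟨∅, ?_⟩
      ext M
      simp only [Finset.mem_filter, Finset.mem_powerset, Finset.subset_empty,
        Finset.mem_singleton, Finset.card_eq_zero]
      constructor
      · rintro ⟨h1, -, -⟩; exact h1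
      · rintro rfl
        exact ⟨rfl, rfl, fun e he => absurd he (Finset.notMem_empty e)⟩
    · rw [if_neg (by omega)]
      rw [Finset.card_eq_zero]
      ext M
      simp only [Finset.mem_filter, Finset.mem_powerset, Finset.notMem_empty, iff_false]
      rintro ⟨hsub, hcard, -⟩
      rw [Finset.subset_empty] at hsub
      subst hsub
      simp at hcard
      omega
  unfold matchPoly
  rw [Finset.sum_eq_single_of_mem 0 (Finset.mem_range.mpr (by omega))]
  · simp [hcount]
  · intro k _ hk
    simp [hcount, hk]

end FinHypergraph
namespace FinHypergraph

variable {α : Type*}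

/-- `M` covers `v`: some edge of the matching contains `v`. -/
def Covers (M : Finset (Finset α)) (v : α) : Prop := ∃ e ∈ M, v ∈ e

lemma mset_removeVerts (H : FinHypergraph α) (v : α) :
    (H.removeVerts {v}).mset = H.mset.filter (fun M => ¬ Covers M v) := by
  classical
  ext M
  rw [Finset.mem_filter, mem_mset, mem_mset]
  simp only [removeVerts, Covers]
  constructor
  · rintro ⟨hsub, hm⟩
    refine ⟨⟨fun e he => (Finset.mem_filter.mp (hsub he)).1, hm⟩, ?_⟩
    rintro ⟨e, he, hve⟩
    have := (Finset.mem_filter.mp (hsub he)).2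
    exact (Finset.disjoint_right.mp this (Finset.mem_singleton_self v)) hve
  · rintro ⟨⟨hsub, hm⟩, hnc⟩
    refine ⟨fun e he => Finset.mem_filter.mpr ⟨hsub he, ?_⟩, hm⟩
    rw [Finset.disjoint_singleton_right]
    exact fun hve => hnc ⟨e, he, hve⟩

lemma card_removeVerts_verts {H : FinHypergraph α} {v : α} (hv : v ∈ H.verts) :
    (H.removeVerts {v}).verts.card = H.verts.card - 1 := by
  classical
  show (H.verts \ {v}).card = H.verts.card - 1
  rw [Finset.card_sdiff_of_subset (Finset.singleton_subset_iff.mpr hv), Finset.card_singleton]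

/-- The contribution of the matchings covering `v` to the matching polynomial. -/
noncomputable def csum (H : FinHypergraph α) (r : ℕ) (v : α) (x : ℝ) : ℝ :=
  ∑ M ∈ H.mset.filter (fun M => Covers M v),
    (-1 : ℝ) ^ M.card * x ^ (H.verts.card - r * M.card)

lemma matchPoly_split {H : FinHypergraph α} {r : ℕ} (hr : 1 ≤ r) (hwf : H.WellFormed)
    (hu : H.Uniform r) {v : α} (hv : v ∈ H.verts) (x : ℝ) :
    H.matchPoly r x = x * (H.removeVerts {v}).matchPoly r x + H.csum r v x := by
  classical
  rw [matchPoly_eq_sum hr hwf hu,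
    ← Finset.sum_filter_add_sum_filter_not H.mset (fun M => Covers M v), csum, add_comm]
  congr 1
  rw [matchPoly_eq_sum hr (removeVerts_wellFormed hwf _) (removeVerts_uniform hu _),
    Finset.mul_sum, mset_removeVerts]
  refine Finset.sum_congr rfl fun M hM => ?_
  have hb : r * M.card ≤ (H.removeVerts {v}).verts.card := by
    refine mset_bound (removeVerts_wellFormed hwf _) (removeVerts_uniform hu _) ?_
    rw [mset_removeVerts]; exact hM
  rw [card_removeVerts_verts hv] at hb ⊢
  have hv1 : 1 ≤ H.verts.card := Finset.card_pos.mpr ⟨v, hv⟩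
  have : H.verts.card - r * M.card = (H.verts.card - 1 - r * M.card) + 1 := by omega
  rw [this, pow_succ]
  ring

section TwoParts

variable {G H : FinHypergraph α} {r : ℕ}

lemma edges_disjoint_of_verts_disjoint (hr : 1 ≤ r) (hGwf : G.WellFormed) (hHwf : H.WellFormed)
    (hGu : G.Uniform r) (hd : Disjoint G.verts H.verts) : Disjoint G.edges H.edges := by
  rw [Finset.disjoint_left]
  intro e heG heH
  have h1 : e.Nonempty := by
    rw [← Finset.card_pos, hGu e heG]; omega
  obtain ⟨a, ha⟩ := h1
  exact Finset.disjoint_left.mp hd (hGwf e heG ha) (hHwf e heH ha)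

lemma pair_union_mem_mset (hE : Disjoint G.edges H.edges)
    {M1 M2 : Finset (Finset α)} (h1 : M1 ∈ G.mset) (h2 : M2 ∈ H.mset)
    (hcross : ∀ e ∈ M1, ∀ f ∈ M2, Disjoint e f) :
    M1 ∪ M2 ∈ (G.disjUnion H).mset ∧ (M1 ∪ M2).card = M1.card + M2.card ∧
      (M1 ∪ M2) ∩ G.edges = M1 ∧ (M1 ∪ M2) ∩ H.edges = M2 := by
  classical
  rw [mem_mset] at h1 h2
  have hMd : Disjoint M1 M2 := Finset.disjoint_of_subset_left h1.1
    (Finset.disjoint_of_subset_right h2.1 hE)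
  have hmatch : IsMatchingSet (M1 ∪ M2) := by
    intro e he f hf hne
    rw [Finset.mem_union] at he hf
    rcases he with he | he <;> rcases hf with hf | hf
    · exact h1.2 e he f hf hne
    · exact hcross e he f hf
    · exact (hcross f hf e he).symm
    · exact h2.2 e he f hf hne
  refine ⟨mem_mset.mpr ⟨?_, hmatch⟩, Finset.card_union_of_disjoint hMd, ?_, ?_⟩
  · show M1 ∪ M2 ⊆ G.edges ∪ H.edges
    exact Finset.union_subset_union h1.1 h2.1
  · rw [Finset.union_inter_distrib_right, Finset.inter_eq_left.mpr h1.1,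
      Finset.eq_empty_of_forall_notMem (s := M2 ∩ G.edges), Finset.union_empty]
    intro e he
    rw [Finset.mem_inter] at he
    exact Finset.disjoint_left.mp hE he.2 (h2.1 he.1)
  · rw [Finset.union_inter_distrib_right, Finset.inter_eq_left.mpr h2.1,
      Finset.eq_empty_of_forall_notMem (s := M1 ∩ H.edges), Finset.empty_union]
    intro e he
    rw [Finset.mem_inter] at he
    exact Finset.disjoint_left.mp hE (h1.1 he.1) he.2

lemma mset_union_split (hE : Disjoint G.edges H.edges)
    {M : Finset (Finset α)} (hM : M ∈ (G.disjUnion H).mset) :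
    M ∩ G.edges ∈ G.mset ∧ M ∩ H.edges ∈ H.mset ∧ M = (M ∩ G.edges) ∪ (M ∩ H.edges) := by
  classical
  rw [mem_mset] at hM
  obtain ⟨hsub, hm⟩ := hM
  refine ⟨mem_mset.mpr ⟨Finset.inter_subset_right, isMatchingSet_subset hm Finset.inter_subset_left⟩,
    mem_mset.mpr ⟨Finset.inter_subset_right, isMatchingSet_subset hm Finset.inter_subset_left⟩, ?_⟩
  rw [← Finset.inter_union_distrib_left]
  exact (Finset.inter_eq_left.mpr hsub).symm

/-- Disjoint union: matching polynomials multiply. -/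
lemma matchPoly_disjUnion (hr : 1 ≤ r) (hGwf : G.WellFormed) (hHwf : H.WellFormed)
    (hGu : G.Uniform r) (hHu : H.Uniform r) (hd : Disjoint G.verts H.verts) (x : ℝ) :
    (G.disjUnion H).matchPoly r x = G.matchPoly r x * H.matchPoly r x := by
  classical
  have hE := edges_disjoint_of_verts_disjoint hr hGwf hHwf hGu hd
  have hwf := disjUnion_wellFormed hGwf hHwf
  have hu := disjUnion_uniform hGu hHu
  have hn : (G.disjUnion H).verts.card = G.verts.card + H.verts.card :=
    Finset.card_union_of_disjoint hd
  rw [matchPoly_eq_sum hr hwf hu, matchPoly_eq_sum hr hGwf hGu,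
    matchPoly_eq_sum hr hHwf hHu, Finset.sum_mul_sum]
  rw [← Finset.sum_product']
  refine Finset.sum_nbij' (fun M => (M ∩ G.edges, M ∩ H.edges))
    (fun p => p.1 ∪ p.2) ?_ ?_ ?_ ?_ ?_
  · intro M hM
    obtain ⟨h1, h2, -⟩ := mset_union_split hE hM
    exact Finset.mem_product.mpr ⟨h1, h2⟩
  · intro p hp
    rw [Finset.mem_product] at hp
    refine (pair_union_mem_mset hE hp.1 hp.2 ?_).1
    intro e he f hf
    exact Finset.disjoint_of_subset_left (hGwf e ((mem_mset.mp hp.1).1 he))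
      (Finset.disjoint_of_subset_right (hHwf f ((mem_mset.mp hp.2).1 hf)) hd)
  · intro M hM
    exact (mset_union_split hE hM).2.2.symm
  · intro p hp
    rw [Finset.mem_product] at hp
    have := pair_union_mem_mset hE hp.1 hp.2 (fun e he f hf =>
      Finset.disjoint_of_subset_left (hGwf e ((mem_mset.mp hp.1).1 he))
        (Finset.disjoint_of_subset_right (hHwf f ((mem_mset.mp hp.2).1 hf)) hd))
    exact Prod.ext this.2.2.1 this.2.2.2
  · intro M hM
    obtain ⟨h1, h2, hMeq⟩ := mset_union_split hE hM
    have hcard : M.card = (M ∩ G.edges).card + (M ∩ H.edges).card := by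
      conv_lhs => rw [hMeq]
      refine Finset.card_union_of_disjoint ?_
      exact Finset.disjoint_of_subset_left Finset.inter_subset_right
        (Finset.disjoint_of_subset_right Finset.inter_subset_right hE)
    have b1 := mset_bound hGwf hGu h1
    have b2 := mset_bound hHwf hHu h2
    have hexp : (G.disjUnion H).verts.card - r * ((M ∩ G.edges).card + (M ∩ H.edges).card) =
        (G.verts.card - r * (M ∩ G.edges).card) + (H.verts.card - r * (M ∩ H.edges).card) := by
      rw [hn]
      have : r * ((M ∩ G.edges).card + (M ∩ H.edges).card)
          = r * (M ∩ G.edges).card + r * (M ∩ H.edges).card := by ring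
      omega
    dsimp only
    rw [hcard, hexp, pow_add, pow_add]
    ring

end TwoParts

end FinHypergraph
namespace FinHypergraph

variable {α : Type*}

private lemma sum_prod_mul {β : Type*} (s t : Finset β) (f g : β → ℝ) (c : ℝ) :
    ∑ p ∈ s ×ˢ t, c * (f p.1 * g p.2) = c * ((∑ a ∈ s, f a) * (∑ b ∈ t, g b)) := by
  rw [Finset.sum_product' (f := fun a b => c * (f a * g b)), Finset.sum_mul_sum,
    Finset.mul_sum]
  exact Finset.sum_congr rfl fun a _ => by rw [Finset.mul_sum]

lemma matchPoly_glue {G H : FinHypergraph α} {r : ℕ} (hr : 2 ≤ r)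
    (hGwf : G.WellFormed) (hHwf : H.WellFormed) (hGu : G.Uniform r) (hHu : H.Uniform r)
    {v : α} (hv : G.verts ∩ H.verts = {v}) (x : ℝ) :
    (G.disjUnion H).matchPoly r x =
      G.matchPoly r x * (H.removeVerts {v}).matchPoly r x
      + (G.removeVerts {v}).matchPoly r x * H.matchPoly r x
      - x * ((G.removeVerts {v}).matchPoly r x * (H.removeVerts {v}).matchPoly r x) := by
  classical
  have hr1 : 1 ≤ r := by omega
  have hvG : v ∈ G.verts := by
    have : v ∈ G.verts ∩ H.verts := by rw [hv]; exact Finset.mem_singleton_self v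
    exact (Finset.mem_inter.mp this).1
  have hvH : v ∈ H.verts := by
    have : v ∈ G.verts ∩ H.verts := by rw [hv]; exact Finset.mem_singleton_self v
    exact (Finset.mem_inter.mp this).2
  have hnG : 1 ≤ G.verts.card := Finset.card_pos.mpr ⟨v, hvG⟩
  have hnH : 1 ≤ H.verts.card := Finset.card_pos.mpr ⟨v, hvH⟩
  -- edges of G and H are distinct
  have hE : Disjoint G.edges H.edges := by
    rw [Finset.disjoint_left]
    intro e heG heH
    have hsub : e ⊆ {v} := by
      rw [← hv]
      exact Finset.subset_inter (hGwf e heG) (hHwf e heH)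
    have := Finset.card_le_card hsub
    rw [Finset.card_singleton, hGu e heG] at this
    omega
  have hwf := disjUnion_wellFormed hGwf hHwf
  have hu := disjUnion_uniform hGu hHu
  have hn : (G.disjUnion H).verts.card + 1 = G.verts.card + H.verts.card := by
    show (G.verts ∪ H.verts).card + 1 = _
    have := Finset.card_union_add_card_inter G.verts H.verts
    rw [hv, Finset.card_singleton] at this
    exact this
  set n := (G.disjUnion H).verts.card with hndef
  set nG := G.verts.card
  set nH := H.verts.card
  -- the three classes of matchings of G
  set msAG := G.mset.filter (fun M => ¬ Covers M v) with hmsAG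
  set msCG := G.mset.filter (fun M => Covers M v) with hmsCG
  set msAH := H.mset.filter (fun M => ¬ Covers M v) with hmsAH
  set msCH := H.mset.filter (fun M => Covers M v) with hmsCH
  -- the sums
  set AG := (G.removeVerts {v}).matchPoly r x with hAGdef
  set AH := (H.removeVerts {v}).matchPoly r x with hAHdef
  have hAG : AG = ∑ M ∈ msAG, (-1 : ℝ) ^ M.card * x ^ (nG - 1 - r * M.card) := by
    rw [hAGdef, matchPoly_eq_sum hr1 (removeVerts_wellFormed hGwf _)
      (removeVerts_uniform hGu _), mset_removeVerts, card_removeVerts_verts hvG]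
  have hAH : AH = ∑ M ∈ msAH, (-1 : ℝ) ^ M.card * x ^ (nH - 1 - r * M.card) := by
    rw [hAHdef, matchPoly_eq_sum hr1 (removeVerts_wellFormed hHwf _)
      (removeVerts_uniform hHu _), mset_removeVerts, card_removeVerts_verts hvH]
  have hbAG : ∀ M ∈ msAG, r * M.card ≤ nG - 1 := by
    intro M hM
    have := mset_bound (removeVerts_wellFormed hGwf {v}) (removeVerts_uniform hGu {v})
      (M := M) (by rw [mset_removeVerts]; exact hM)
    rwa [card_removeVerts_verts hvG] at this
  have hbAH : ∀ M ∈ msAH, r * M.card ≤ nH - 1 := by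
    intro M hM
    have := mset_bound (removeVerts_wellFormed hHwf {v}) (removeVerts_uniform hHu {v})
      (M := M) (by rw [mset_removeVerts]; exact hM)
    rwa [card_removeVerts_verts hvH] at this
  have hbCG : ∀ M ∈ msCG, r * M.card ≤ nG := fun M hM =>
    mset_bound hGwf hGu (Finset.mem_filter.mp hM).1
  have hbCH : ∀ M ∈ msCH, r * M.card ≤ nH := fun M hM =>
    mset_bound hHwf hHu (Finset.mem_filter.mp hM).1
  -- the set of good pairs
  set GP := (G.mset ×ˢ H.mset).filter (fun p => ¬ (Covers p.1 v ∧ Covers p.2 v)) with hGP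
  -- step 1 : the matching polynomial of the union as a sum over good pairs
  have step1 : (G.disjUnion H).matchPoly r x =
      ∑ p ∈ GP, (-1 : ℝ) ^ (p.1.card + p.2.card) * x ^ (n - r * (p.1.card + p.2.card)) := by
    rw [matchPoly_eq_sum hr1 hwf hu]
    refine Finset.sum_nbij' (fun M => (M ∩ G.edges, M ∩ H.edges)) (fun p => p.1 ∪ p.2)
      ?_ ?_ ?_ ?_ ?_
    · intro M hM
      obtain ⟨h1, h2, -⟩ := mset_union_split hE hM
      rw [hGP, Finset.mem_filter, Finset.mem_product]
      refine ⟨⟨h1, h2⟩, ?_⟩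
      rintro ⟨⟨e1, he1, hve1⟩, ⟨e2, he2, hve2⟩⟩
      rw [Finset.mem_inter] at he1 he2
      have hne : e1 ≠ e2 := by
        rintro rfl
        exact Finset.disjoint_left.mp hE he1.2 he2.2
      have := (mem_mset.mp hM).2 e1 he1.1 e2 he2.1 hne
      exact Finset.disjoint_left.mp this hve1 hve2
    · intro p hp
      rw [hGP, Finset.mem_filter, Finset.mem_product] at hp
      refine (pair_union_mem_mset hE hp.1.1 hp.1.2 ?_).1
      intro e he f hf
      have hef : e ∩ f ⊆ {v} := by
        rw [← hv]
        exact Finset.inter_subset_inter (hGwf e ((mem_mset.mp hp.1.1).1 he))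
          (hHwf f ((mem_mset.mp hp.1.2).1 hf))
      rw [Finset.disjoint_iff_inter_eq_empty]
      rcases Finset.subset_singleton_iff.mp hef with h | h
      · exact h
      · exfalso
        have hv' : v ∈ e ∩ f := by rw [h]; exact Finset.mem_singleton_self v
        exact hp.2 ⟨⟨e, he, (Finset.mem_inter.mp hv').1⟩, ⟨f, hf, (Finset.mem_inter.mp hv').2⟩⟩
    · intro M hM
      exact (mset_union_split hE hM).2.2.symm
    · intro p hp
      rw [hGP, Finset.mem_filter, Finset.mem_product] at hp
      have := pair_union_mem_mset hE hp.1.1 hp.1.2 (fun e he f hf => by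
        have hef : e ∩ f ⊆ {v} := by
          rw [← hv]
          exact Finset.inter_subset_inter (hGwf e ((mem_mset.mp hp.1.1).1 he))
            (hHwf f ((mem_mset.mp hp.1.2).1 hf))
        rw [Finset.disjoint_iff_inter_eq_empty]
        rcases Finset.subset_singleton_iff.mp hef with h | h
        · exact h
        · exfalso
          have hv' : v ∈ e ∩ f := by rw [h]; exact Finset.mem_singleton_self v
          exact hp.2 ⟨⟨e, he, (Finset.mem_inter.mp hv').1⟩,
            ⟨f, hf, (Finset.mem_inter.mp hv').2⟩⟩)
      exact Prod.ext this.2.2.1 this.2.2.2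
    · intro M hM
      obtain ⟨h1, h2, hMeq⟩ := mset_union_split hE hM
      have hcard : M.card = (M ∩ G.edges).card + (M ∩ H.edges).card := by
        conv_lhs => rw [hMeq]
        exact Finset.card_union_of_disjoint (Finset.disjoint_of_subset_left
          Finset.inter_subset_right
          (Finset.disjoint_of_subset_right Finset.inter_subset_right hE))
      dsimp only
      rw [hcard]
  -- step 2 : split the good pairs into three classes
  have hsplit : GP = (msAG ×ˢ msAH) ∪ ((msCG ×ˢ msAH) ∪ (msAG ×ˢ msCH)) := by
    ext p
    rw [hGP, hmsAG, hmsAH, hmsCG, hmsCH]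
    simp only [Finset.mem_filter, Finset.mem_product, Finset.mem_union]
    tauto
  have hd1 : Disjoint (msAG ×ˢ msAH) ((msCG ×ˢ msAH) ∪ (msAG ×ˢ msCH)) := by
    rw [Finset.disjoint_left]
    intro p hp hp'
    simp only [hmsAG, hmsAH, hmsCG, hmsCH, Finset.mem_product, Finset.mem_union,
      Finset.mem_filter] at hp hp'
    tauto
  have hd2 : Disjoint (msCG ×ˢ msAH) (msAG ×ˢ msCH) := by
    rw [Finset.disjoint_left]
    intro p hp hp'
    simp only [hmsAG, hmsAH, hmsCG, hmsCH, Finset.mem_product, Finset.mem_filter] at hp hp'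
    tauto
  -- step 3 : evaluate the three class sums
  have sAA : ∑ p ∈ msAG ×ˢ msAH,
      (-1 : ℝ) ^ (p.1.card + p.2.card) * x ^ (n - r * (p.1.card + p.2.card))
      = x * (AG * AH) := by
    rw [hAG, hAH, ← sum_prod_mul]
    refine Finset.sum_congr rfl fun p hp => ?_
    rw [Finset.mem_product] at hp
    have b1 := hbAG p.1 hp.1
    have b2 := hbAH p.2 hp.2
    have hexp : n - r * (p.1.card + p.2.card)
        = ((nG - 1 - r * p.1.card) + (nH - 1 - r * p.2.card)) + 1 := by
      have : r * (p.1.card + p.2.card) = r * p.1.card + r * p.2.card := by ring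
      omega
    rw [hexp, pow_add, pow_add, pow_add, pow_one]
    ring
  have sCA : ∑ p ∈ msCG ×ˢ msAH,
      (-1 : ℝ) ^ (p.1.card + p.2.card) * x ^ (n - r * (p.1.card + p.2.card))
      = 1 * (G.csum r v x * AH) := by
    rw [hAH, csum, ← hmsCG, ← sum_prod_mul]
    refine Finset.sum_congr rfl fun p hp => ?_
    rw [Finset.mem_product] at hp
    have b1 := hbCG p.1 hp.1
    have b2 := hbAH p.2 hp.2
    have hexp : n - r * (p.1.card + p.2.card)
        = (nG - r * p.1.card) + (nH - 1 - r * p.2.card) := by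
      have : r * (p.1.card + p.2.card) = r * p.1.card + r * p.2.card := by ring
      omega
    rw [hexp, pow_add, pow_add]
    ring
  have sAC : ∑ p ∈ msAG ×ˢ msCH,
      (-1 : ℝ) ^ (p.1.card + p.2.card) * x ^ (n - r * (p.1.card + p.2.card))
      = 1 * (AG * H.csum r v x) := by
    rw [hAG, csum, ← hmsCH, ← sum_prod_mul]
    refine Finset.sum_congr rfl fun p hp => ?_
    rw [Finset.mem_product] at hp
    have b1 := hbAG p.1 hp.1
    have b2 := hbCH p.2 hp.2
    have hexp : n - r * (p.1.card + p.2.card)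
        = (nG - 1 - r * p.1.card) + (nH - r * p.2.card) := by
      have : r * (p.1.card + p.2.card) = r * p.1.card + r * p.2.card := by ring
      omega
    rw [hexp, pow_add, pow_add]
    ring
  have key : (G.disjUnion H).matchPoly r x =
      x * (AG * AH) + G.csum r v x * AH + AG * H.csum r v x := by
    rw [step1, hsplit, Finset.sum_union hd1, Finset.sum_union hd2, sAA, sCA, sAC]
    ring
  have hGs := matchPoly_split hr1 hGwf hGu hvG x
  have hHs := matchPoly_split hr1 hHwf hHu hvH x
  rw [key, hGs, hHs, ← hAGdef, ← hAHdef]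
  ring

end FinHypergraph
/-- The fundamental path sequence: `d 0 = 0`, `d 1 = 1`,
`d (m+2) = x^(r-1) d(m+1) - x^(r-2) d m`. -/
noncomputable def dSeq (r : ℕ) (x : ℝ) : ℕ → ℝ
  | 0 => 0
  | 1 => 1
  | (m+2) => x ^ (r-1) * dSeq r x (m+1) - x ^ (r-2) * dSeq r x m

lemma dSeq_zero (r : ℕ) (x : ℝ) : dSeq r x 0 = 0 := rfl
lemma dSeq_one (r : ℕ) (x : ℝ) : dSeq r x 1 = 1 := rfl
lemma dSeq_rec (r : ℕ) (x : ℝ) (m : ℕ) :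
    dSeq r x (m+2) = x ^ (r-1) * dSeq r x (m+1) - x ^ (r-2) * dSeq r x m := rfl

/-- The first determinant identity for the path sequence. -/
lemma dSeq_I (r : ℕ) (x : ℝ) :
    ∀ b a : ℕ, b ≤ a →
      dSeq r x (a+1) * dSeq r x (b+1) - dSeq r x (a+2) * dSeq r x b
        = x ^ (b*(r-2)) * dSeq r x (a+1-b) := by
  intro b
  induction b with
  | zero => intro a _; simp [dSeq_zero, dSeq_one]
  | succ b ih =>
    intro a hba
    obtain ⟨a', rfl⟩ : ∃ a', a = a' + 1 := ⟨a - 1, by omega⟩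
    have hba' : b ≤ a' := by omega
    have ih' := ih a' hba'
    have hpow : (x : ℝ) ^ ((b+1)*(r-2)) = x ^ (b*(r-2)) * x ^ (r-2) := by
      rw [← pow_add]
      congr 1
      rw [Nat.succ_mul]
    have h1 : a' + 1 + 2 = (a' + 1) + 2 := rfl
    have h2 : a' + 1 + 1 - (b + 1) = a' + 1 - b := by omega
    rw [dSeq_rec r x b, show a'+1+2 = a'+1+2 from rfl, dSeq_rec r x (a'+1), h2, hpow]
    linear_combination x ^ (r-2) * ih'

/-- The second determinant identity for the path sequence. -/
lemma dSeq_II (r : ℕ) (x : ℝ) {p q : ℕ} (hr : 2 ≤ r) (hq : 1 ≤ q) (hpq : q ≤ p) :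
    dSeq r x p * dSeq r x (q+1) - dSeq r x (p+2) * dSeq r x (q-1)
      = x ^ (q*(r-2)+1) * dSeq r x (p-q+1) := by
  obtain ⟨q', rfl⟩ : ∃ q', q = q' + 1 := ⟨q - 1, by omega⟩
  obtain ⟨p', rfl⟩ : ∃ p', p = p' + 1 := ⟨p - 1, by omega⟩
  have hqp' : q' ≤ p' := by omega
  have hI := dSeq_I r x q' p' hqp'
  have h2 : p' + 1 - (q' + 1) + 1 = p' + 1 - q' := by omega
  have hpow : (x : ℝ) ^ ((q'+1)*(r-2)+1) = x ^ (r-1) * x ^ (q'*(r-2)) := by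
    rw [← pow_add]
    congr 1
    rw [Nat.succ_mul]
    omega
  have h3 : q' + 1 - 1 = q' := by omega
  have h4 : p' + 1 + 2 = p' + 2 + 1 := by omega
  rw [h3, h2, show q'+1+1 = q'+2 from rfl, dSeq_rec r x q', show p'+1+2 = (p'+1)+2 from rfl,
    dSeq_rec r x (p'+1), hpow]
  linear_combination x ^ (r-1) * hI

namespace FinHypergraph

variable {α : Type*}

lemma matchPoly_singleEdge {H : FinHypergraph α} {r : ℕ} (hr : 1 ≤ r)
    (hcard : H.verts.card = r) (hedges : H.edges = {H.verts}) (x : ℝ) :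
    H.matchPoly r x = x ^ r - 1 := by
  classical
  have hwf : H.WellFormed := by
    intro e he
    rw [hedges, Finset.mem_singleton] at he
    subst he
    exact subset_rfl
  have hu : H.Uniform r := by
    intro e he
    rw [hedges, Finset.mem_singleton] at he
    subst he
    exact hcard
  have hmset : H.mset = {∅, {H.verts}} := by
    rw [mset, hedges, show ({H.verts} : Finset (Finset α)).powerset = {∅, {H.verts}} from rfl]
    refine Finset.filter_true_of_mem ?_
    intro M hM
    rw [Finset.mem_insert, Finset.mem_singleton] at hM
    rcases hM with rfl | rfl
    · intro e he; exact absurd he (Finset.notMem_empty e)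
    · intro e he f hf hne
      rw [Finset.mem_singleton] at he hf
      exact absurd (he.trans hf.symm) hne
  rw [matchPoly_eq_sum hr hwf hu, hmset,
    Finset.sum_pair (by exact fun h => (Finset.singleton_ne_empty _) h.symm)]
  simp only [Finset.card_empty, Finset.card_singleton, pow_zero, pow_one, hcard]
  rw [Nat.mul_one, Nat.sub_self, Nat.mul_zero, Nat.sub_zero, pow_zero]
  ring

end FinHypergraph
namespace FinHypergraph

variable {α : Type*}

lemma mem_loosePathEdges {r m : ℕ} {w : ℕ → α} {e : Finset α} :
    e ∈ loosePathEdges r m w ↔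
      ∃ i < m, e = (Finset.Icc (i*(r-1)) ((i+1)*(r-1))).image w := by
  simp only [loosePathEdges, Finset.mem_image, Finset.mem_range]
  constructor
  · rintro ⟨i, hi, rfl⟩; exact ⟨i, hi, rfl⟩
  · rintro ⟨i, hi, rfl⟩; exact ⟨i, hi, rfl⟩

lemma shift_edge (r : ℕ) (w : ℕ → α) (i : ℕ) :
    (Finset.Icc (i*(r-1)) ((i+1)*(r-1))).image (fun j => w (j + (r-1)))
      = (Finset.Icc ((i+1)*(r-1)) ((i+2)*(r-1))).image w := by
  rw [show (fun j => w (j + (r-1))) = w ∘ (fun j => j + (r-1)) from rfl,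
    ← Finset.image_image, Finset.image_add_right_Icc,
    show i*(r-1)+(r-1) = (i+1)*(r-1) from (Nat.succ_mul _ _).symm,
    show (i+1)*(r-1)+(r-1) = (i+2)*(r-1) from (Nat.succ_mul (i+1) _).symm]

lemma shift_verts (r m : ℕ) (w : ℕ → α) :
    (Finset.Icc 0 (m*(r-1))).image (fun j => w (j + (r-1)))
      = (Finset.Icc (r-1) ((m+1)*(r-1))).image w := by
  rw [show (fun j => w (j + (r-1))) = w ∘ (fun j => j + (r-1)) from rfl,
    ← Finset.image_image, Finset.image_add_right_Icc, Nat.zero_add,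
    show m*(r-1)+(r-1) = (m+1)*(r-1) from (Nat.succ_mul _ _).symm]

/-- The loose path hypergraph of length `m` on the labelling `w`. -/
noncomputable def loosePathHG (r m : ℕ) (w : ℕ → α) : FinHypergraph α :=
  ⟨(Finset.Icc 0 (m*(r-1))).image w, loosePathEdges r m w⟩

lemma loosePathHG_wellFormed {r m : ℕ} (hr : 2 ≤ r) (w : ℕ → α) :
    (loosePathHG r m w).WellFormed := by
  intro e he
  rw [show (loosePathHG r m w).edges = loosePathEdges r m w from rfl,
    mem_loosePathEdges] at he
  obtain ⟨i, hi, rfl⟩ := he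
  refine Finset.image_subset_image ?_
  intro j hj
  rw [Finset.mem_Icc] at hj ⊢
  constructor
  · omega
  · calc j ≤ (i+1)*(r-1) := hj.2
      _ ≤ m*(r-1) := Nat.mul_le_mul_right _ (by omega)

lemma loosePathHG_uniform {r m : ℕ} (hr : 2 ≤ r) {w : ℕ → α}
    (hinj : Set.InjOn w (Set.Iic (m*(r-1)))) :
    (loosePathHG r m w).Uniform r := by
  intro e he
  rw [show (loosePathHG r m w).edges = loosePathEdges r m w from rfl,
    mem_loosePathEdges] at he
  obtain ⟨i, hi, rfl⟩ := he
  rw [Finset.card_image_of_injOn, Nat.card_Icc]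
  · have h1 : (i+1)*(r-1) = i*(r-1) + (r-1) := by rw [Nat.succ_mul]
    omega
  · refine hinj.mono ?_
    intro j hj
    simp only [Finset.coe_Icc, Set.mem_Icc] at hj
    simp only [Set.mem_Iic]
    calc j ≤ (i+1)*(r-1) := hj.2
      _ ≤ m*(r-1) := Nat.mul_le_mul_right _ (by omega)

/-- Removing the first vertex of `image w (Icc 0 n)` leaves `image w (Icc 1 n)`. -/
lemma image_Icc_sdiff_first {n : ℕ} {w : ℕ → α} (hinj : Set.InjOn w (Set.Iic n)) :
    (Finset.Icc 0 n).image w \ {w 0} = (Finset.Icc 1 n).image w := by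
  classical
  ext a
  simp only [Finset.mem_sdiff, Finset.mem_image, Finset.mem_singleton, Finset.mem_Icc]
  constructor
  · rintro ⟨⟨j, hj, rfl⟩, hne⟩
    refine ⟨j, ⟨?_, hj.2⟩, rfl⟩
    rcases Nat.eq_zero_or_pos j with rfl | h
    · exact absurd rfl hne
    · omega
  · rintro ⟨j, hj, rfl⟩
    refine ⟨⟨j, ⟨by omega, hj.2⟩, rfl⟩, fun h => ?_⟩
    have := hinj (Set.mem_Iic.mpr hj.2) (Set.mem_Iic.mpr (by omega : (0:ℕ) ≤ n)) h
    omega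

/-- The key structural facts about a loose path of length `m+1`. -/
lemma loosePath_step (r : ℕ) (hr : 2 ≤ r) (m : ℕ) (w : ℕ → α)
    (hinj : Set.InjOn w (Set.Iic ((m+1)*(r-1)))) :
    loosePathHG r (m+1) w =
      (FinHypergraph.mk ((Finset.Icc 0 (r-1)).image w) {(Finset.Icc 0 (r-1)).image w}).disjUnion
        (loosePathHG r m (fun j => w (j + (r-1)))) ∧
    ((Finset.Icc 0 (r-1)).image w) ∩ (loosePathHG r m (fun j => w (j + (r-1)))).verts
      = {w (r-1)} := by
  classical
  have hc1 : 1 ≤ r - 1 := by omega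
  have hmul : (m+1)*(r-1) = m*(r-1) + (r-1) := by rw [Nat.succ_mul]
  -- vertices of the shifted path
  have hP'verts : (loosePathHG r m (fun j => w (j + (r-1)))).verts
      = (Finset.Icc (r-1) ((m+1)*(r-1))).image w := by
    exact shift_verts r m w
  have hIccsplit : Finset.Icc 0 ((m+1)*(r-1))
      = Finset.Icc 0 (r-1) ∪ Finset.Icc (r-1) ((m+1)*(r-1)) := by
    ext j
    simp only [Finset.mem_Icc, Finset.mem_union]
    rw [hmul]
    omega
  constructor
  · refine ext' ?_ ?_
    · show (Finset.Icc 0 ((m+1)*(r-1))).image w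
        = (Finset.Icc 0 (r-1)).image w ∪ (loosePathHG r m (fun j => w (j + (r-1)))).verts
      rw [hP'verts, ← Finset.image_union, ← hIccsplit]
    · show loosePathEdges r (m+1) w
        = {(Finset.Icc 0 (r-1)).image w} ∪ loosePathEdges r m (fun j => w (j + (r-1)))
      ext e
      rw [mem_loosePathEdges, Finset.mem_union, Finset.mem_singleton, mem_loosePathEdges]
      have hedge := shift_edge r w
      constructor
      · rintro ⟨i, hi, rfl⟩
        rcases Nat.eq_zero_or_pos i with rfl | hipos
        · left; rw [Nat.zero_mul, Nat.one_mul]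
        · right
          obtain ⟨i', rfl⟩ : ∃ i', i = i' + 1 := ⟨i - 1, by omega⟩
          exact ⟨i', by omega, (hedge i').symm⟩
      · rintro (rfl | ⟨i, hi, rfl⟩)
        · exact ⟨0, by omega, by rw [Nat.zero_mul, Nat.one_mul]⟩
        · exact ⟨i+1, by omega, by rw [hedge i]⟩
  · rw [hP'verts, ← Finset.image_inter_of_injOn _ _ (hinj.mono ?_)]
    · have : Finset.Icc 0 (r-1) ∩ Finset.Icc (r-1) ((m+1)*(r-1)) = {r-1} := by
        ext j
        simp only [Finset.mem_inter, Finset.mem_Icc, Finset.mem_singleton]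
        omega
      rw [this, Finset.image_singleton]
    · intro j hj
      simp only [Finset.coe_union, Finset.coe_Icc, Set.mem_union, Set.mem_Icc] at hj
      simp only [Set.mem_Iic]
      rcases hj with h | h
      · calc j ≤ r - 1 := h.2
          _ ≤ (m+1)*(r-1) := by rw [hmul]; omega
      · exact h.2

set_option maxHeartbeats 1000000 in
/-- Matching polynomials of a loose path and of a loose path minus its first vertex. -/
lemma loosePath_matchPoly (r : ℕ) (hr : 2 ≤ r) (x : ℝ) :
    ∀ (m : ℕ) (w : ℕ → α), Set.InjOn w (Set.Iic (m*(r-1))) →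
      (loosePathHG r m w).matchPoly r x = x * dSeq r x (m+1) - dSeq r x m ∧
      ((loosePathHG r m w).removeVerts {w 0}).matchPoly r x = dSeq r x (m+1) := by
  have hr1 : 1 ≤ r := by omega
  intro m
  induction m with
  | zero =>
    intro w _
    have hv : (loosePathHG r 0 w).verts = {w 0} := by
      show (Finset.Icc 0 (0*(r-1))).image w = {w 0}
      rw [Nat.zero_mul, Finset.Icc_self, Finset.image_singleton]
    have he : (loosePathHG r 0 w).edges = ∅ := by
      show loosePathEdges r 0 w = ∅
      simp [loosePathEdges]
    constructor
    · rw [matchPoly_edgeless he, hv, Finset.card_singleton, dSeq_zero, dSeq_one]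
      ring
    · have he' : ((loosePathHG r 0 w).removeVerts {w 0}).edges = ∅ := by
        show (loosePathHG r 0 w).edges.filter _ = ∅
        rw [he, Finset.filter_empty]
      rw [matchPoly_edgeless he', dSeq_one]
      show x ^ ((loosePathHG r 0 w).verts \ {w 0}).card = 1
      rw [hv, Finset.sdiff_self, Finset.card_empty, pow_zero]
  | succ m ih =>
    intro w hinj
    have hmul : (m+1)*(r-1) = m*(r-1) + (r-1) := by rw [Nat.succ_mul]
    set w' : ℕ → α := fun j => w (j + (r-1)) with hw'
    have hinj' : Set.InjOn w' (Set.Iic (m*(r-1))) := by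
      intro a ha b hb hab
      simp only [Set.mem_Iic] at ha hb
      have h1 := hinj (Set.mem_Iic.mpr (by omega : a + (r-1) ≤ (m+1)*(r-1)))
        (Set.mem_Iic.mpr (by omega : b + (r-1) ≤ (m+1)*(r-1))) hab
      omega
    obtain ⟨ihP, ihP0⟩ := ih w' hinj'
    obtain ⟨hsplit, hmeet⟩ := loosePath_step r hr m w hinj
    set E : FinHypergraph α :=
      FinHypergraph.mk ((Finset.Icc 0 (r-1)).image w) {(Finset.Icc 0 (r-1)).image w} with hE
    set P' := loosePathHG r m w' with hP'
    -- facts about E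
    have hinjE : Set.InjOn w ↑(Finset.Icc 0 (r-1)) := by
      refine hinj.mono ?_
      intro j hj
      simp only [Finset.coe_Icc, Set.mem_Icc] at hj
      simp only [Set.mem_Iic]
      omega
    have hEcard : E.verts.card = r := by
      show ((Finset.Icc 0 (r-1)).image w).card = r
      rw [Finset.card_image_of_injOn hinjE, Nat.card_Icc]
      omega
    have hEwf : E.WellFormed := by
      intro e he
      rw [show E.edges = {(Finset.Icc 0 (r-1)).image w} from rfl,
        Finset.mem_singleton] at he
      subst he
      exact subset_rfl
    have hEu : E.Uniform r := by
      intro e he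
      rw [show E.edges = {(Finset.Icc 0 (r-1)).image w} from rfl,
        Finset.mem_singleton] at he
      subst he
      exact hEcard
    have hwrc : w (r-1) ∈ E.verts :=
      Finset.mem_image.mpr ⟨r-1, Finset.mem_Icc.mpr ⟨Nat.zero_le _, le_rfl⟩, rfl⟩
    have hErm : (E.removeVerts {w (r-1)}).edges = ∅ := by
      show E.edges.filter _ = ∅
      rw [show E.edges = {(Finset.Icc 0 (r-1)).image w} from rfl, Finset.filter_singleton,
        if_neg]
      rw [Finset.disjoint_singleton_right]
      intro h
      exact h (Finset.mem_image.mpr ⟨r-1, Finset.mem_Icc.mpr ⟨Nat.zero_le _, le_rfl⟩, rfl⟩)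
    have hErmcard : (E.removeVerts {w (r-1)}).verts.card = r - 1 := by
      show (E.verts \ {w (r-1)}).card = r - 1
      rw [Finset.card_sdiff_of_subset (Finset.singleton_subset_iff.mpr hwrc),
        Finset.card_singleton, hEcard]
    have hphiE : E.matchPoly r x = x ^ r - 1 := matchPoly_singleEdge hr1 hEcard rfl x
    have hphiE' : (E.removeVerts {w (r-1)}).matchPoly r x = x ^ (r-1) := by
      rw [matchPoly_edgeless hErm, hErmcard]
    -- facts about P'
    have hP'wf : P'.WellFormed := loosePathHG_wellFormed hr w'
    have hP'u : P'.Uniform r := loosePathHG_uniform hr hinj'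
    have hw'0 : w' 0 = w (r-1) := by rw [hw']; simp
    have hphiP'0 : (P'.removeVerts {w (r-1)}).matchPoly r x = dSeq r x (m+1) := by
      rw [← hw'0]; exact ihP0
    -- powers
    have hx1 : x * x ^ (r-1) = x ^ r := by
      rw [← pow_succ', show r - 1 + 1 = r from by omega]
    have hx2 : x * x ^ (r-2) = x ^ (r-1) := by
      rw [← pow_succ', show r - 2 + 1 = r - 1 from by omega]
    constructor
    · show (loosePathHG r (m+1) w).matchPoly r x = _
      rw [hsplit, matchPoly_glue hr hEwf hP'wf hEu hP'u hmeet x, hphiE, hphiE',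
        hphiP'0, ihP, dSeq_rec]
      linear_combination (-(dSeq r x (m+1))) * hx1 + dSeq r x m * hx2
    · -- the path minus its first vertex
      have hQ0 : (loosePathHG r (m+1) w).removeVerts {w 0}
          = (FinHypergraph.mk ((Finset.Icc 1 (r-2)).image w) ∅).disjUnion P' := by
        refine ext' ?_ ?_
        · show (Finset.Icc 0 ((m+1)*(r-1))).image w \ {w 0}
            = (Finset.Icc 1 (r-2)).image w ∪ P'.verts
          rw [image_Icc_sdiff_first hinj]
          have hP'verts : P'.verts = (Finset.Icc (r-1) ((m+1)*(r-1))).image w := by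
            show (Finset.Icc 0 (m*(r-1))).image w' = _
            rw [hw']
            exact shift_verts r m w
          rw [hP'verts, ← Finset.image_union]
          congr 1
          ext j
          simp only [Finset.mem_Icc, Finset.mem_union]
          omega
        · show (loosePathEdges r (m+1) w).filter (fun e => Disjoint e {w 0})
            = ∅ ∪ loosePathEdges r m w'
          rw [Finset.empty_union]
          ext e
          rw [Finset.mem_filter, mem_loosePathEdges, mem_loosePathEdges]
          have hedge : ∀ i : ℕ, (Finset.Icc (i*(r-1)) ((i+1)*(r-1))).image w'
              = (Finset.Icc ((i+1)*(r-1)) ((i+2)*(r-1))).image w := by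
            intro i
            rw [hw']
            exact shift_edge r w i
          have hnotw0 : ∀ i < m, Disjoint ((Finset.Icc (i*(r-1)) ((i+1)*(r-1))).image w')
              {w 0} := by
            intro i hi
            rw [hedge i, Finset.disjoint_singleton_right]
            rintro hmem
            obtain ⟨j, hj, hje⟩ := Finset.mem_image.mp hmem
            rw [Finset.mem_Icc] at hj
            have h1 : (i+1)*(r-1) ≤ (m+1)*(r-1) := Nat.mul_le_mul_right _ (by omega)
            have h2 : (i+2)*(r-1) ≤ (m+1)*(r-1) := Nat.mul_le_mul_right _ (by omega)
            have := hinj (Set.mem_Iic.mpr (by omega : j ≤ (m+1)*(r-1)))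
              (Set.mem_Iic.mpr (by omega : 0 ≤ (m+1)*(r-1))) hje
            have h3 : 1 ≤ (i+1)*(r-1) := by
              calc 1 ≤ r - 1 := by omega
                _ = 1*(r-1) := (Nat.one_mul _).symm
                _ ≤ (i+1)*(r-1) := Nat.mul_le_mul_right _ (by omega)
            omega
          constructor
          · rintro ⟨⟨i, hi, rfl⟩, hdisj⟩
            rcases Nat.eq_zero_or_pos i with rfl | hipos
            · exfalso
              rw [Finset.disjoint_singleton_right] at hdisj
              exact hdisj (Finset.mem_image.mpr ⟨0, Finset.mem_Icc.mpr
                ⟨by simp, Nat.zero_le _⟩, rfl⟩)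
            · obtain ⟨i', rfl⟩ : ∃ i', i = i' + 1 := ⟨i - 1, by omega⟩
              exact ⟨i', by omega, (hedge i').symm⟩
          · rintro ⟨i, hi, rfl⟩
            exact ⟨⟨i+1, by omega, by rw [hedge i]⟩, hnotw0 i hi⟩
      have hIwf : (FinHypergraph.mk ((Finset.Icc 1 (r-2)).image w) ∅ : FinHypergraph α).WellFormed :=
        fun e he => absurd he (Finset.notMem_empty e)
      have hIu : (FinHypergraph.mk ((Finset.Icc 1 (r-2)).image w) ∅ : FinHypergraph α).Uniform r :=
        fun e he => absurd he (Finset.notMem_empty e)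
      have hIdisj : Disjoint ((Finset.Icc 1 (r-2)).image w) P'.verts := by
        have hP'verts : P'.verts = (Finset.Icc (r-1) ((m+1)*(r-1))).image w := by
          show (Finset.Icc 0 (m*(r-1))).image w' = _
          rw [hw']
          exact shift_verts r m w
        rw [hP'verts, Finset.disjoint_left]
        rintro a ha ha'
        obtain ⟨j1, hj1, rfl⟩ := Finset.mem_image.mp ha
        obtain ⟨j2, hj2, hje⟩ := Finset.mem_image.mp ha'
        rw [Finset.mem_Icc] at hj1 hj2
        have := hinj (Set.mem_Iic.mpr hj2.2)
          (Set.mem_Iic.mpr (by omega : j1 ≤ (m+1)*(r-1))) hje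
        omega
      have hIcard : ((Finset.Icc 1 (r-2)).image w).card = r - 2 := by
        rw [Finset.card_image_of_injOn, Nat.card_Icc]
        · omega
        · refine hinj.mono ?_
          intro j hj
          simp only [Finset.coe_Icc, Set.mem_Icc] at hj
          simp only [Set.mem_Iic]
          have : r - 2 ≤ (m+1)*(r-1) := by
            calc r - 2 ≤ r - 1 := by omega
              _ = 1*(r-1) := (Nat.one_mul _).symm
              _ ≤ (m+1)*(r-1) := Nat.mul_le_mul_right _ (by omega)
          omega
      rw [hQ0, matchPoly_disjUnion hr1 hIwf hP'wf hIu hP'u hIdisj,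
        matchPoly_edgeless (H := FinHypergraph.mk ((Finset.Icc 1 (r-2)).image w) ∅) rfl r x, ihP]
      show (x:ℝ) ^ ((Finset.Icc 1 (r-2)).image w).card * (x * dSeq r x (m+1) - dSeq r x m)
        = dSeq r x (m+2)
      rw [hIcard, dSeq_rec]
      have hx3 : (x:ℝ) ^ (r-2) * x = x ^ (r-1) := by
        rw [← pow_succ, show r - 2 + 1 = r - 1 from by omega]
      linear_combination dSeq r x (m+1) * hx3

end FinHypergraph
namespace FinHypergraph

variable {α : Type*}

/-- The effect of attaching a pendant path on the matching polynomial. -/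
lemma matchPoly_attach {T T' : FinHypergraph α} {r : ℕ} (hr : 2 ≤ r) (hwf : T.WellFormed)
    (hu : T.Uniform r) {v : α} (hv : v ∈ T.verts) {p : ℕ}
    (h : IsPendantPathAttach r T v p T') (x : ℝ) :
    T'.matchPoly r x = T.matchPoly r x * dSeq r x (p+1)
        - (T.removeVerts {v}).matchPoly r x * dSeq r x p ∧
    (T'.removeVerts {v}).matchPoly r x
        = (T.removeVerts {v}).matchPoly r x * dSeq r x (p+1) ∧
    T'.WellFormed ∧ T'.Uniform r ∧ v ∈ T'.verts := by
  classical
  obtain ⟨-, w, hw0, hinj, hnew, hverts, hedges⟩ := h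
  set Q := loosePathHG r p w with hQ
  have hQwf : Q.WellFormed := loosePathHG_wellFormed hr w
  have hQu : Q.Uniform r := loosePathHG_uniform hr hinj
  have hQverts : Q.verts = (Finset.Icc 0 (p*(r-1))).image w := rfl
  have hT'eq : T' = T.disjUnion Q := by
    refine ext' ?_ ?_
    · rw [hverts]
      show T.verts ∪ _ = T.verts ∪ (Finset.Icc 0 (p*(r-1))).image w
      rw [show Finset.Icc 0 (p*(r-1)) = insert 0 (Finset.Icc 1 (p*(r-1))) from by
          ext a; simp only [Finset.mem_Icc, Finset.mem_insert]; omega,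
        Finset.image_insert, hw0, Finset.union_insert,
        Finset.insert_eq_self.mpr (Finset.mem_union_left _ hv)]
    · rw [hedges]; rfl
  have hmeet : T.verts ∩ Q.verts = {v} := by
    ext a
    rw [Finset.mem_inter, Finset.mem_singleton, hQverts]
    constructor
    · rintro ⟨haT, haQ⟩
      obtain ⟨j, hj, rfl⟩ := Finset.mem_image.mp haQ
      rw [Finset.mem_Icc] at hj
      rcases Nat.eq_zero_or_pos j with rfl | hj1
      · exact hw0
      · exact absurd haT (hnew j hj1 hj.2)
    · rintro rfl
      exact ⟨hv, Finset.mem_image.mpr ⟨0, Finset.mem_Icc.mpr ⟨le_rfl, Nat.zero_le _⟩, hw0⟩⟩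
  obtain ⟨hphiQ, hphiQ0⟩ := loosePath_matchPoly r hr x p w hinj
  have hphiQ0' : (Q.removeVerts {v}).matchPoly r x = dSeq r x (p+1) := by
    rw [show v = w 0 from hw0.symm]; exact hphiQ0
  have hphiQ' : Q.matchPoly r x = x * dSeq r x (p+1) - dSeq r x p := hphiQ
  refine ⟨?_, ?_, ?_, ?_, ?_⟩
  · rw [hT'eq, matchPoly_glue hr hwf hQwf hu hQu hmeet x, hphiQ', hphiQ0']
    ring
  · have hT'v : (T'.removeVerts {v}) = (T.removeVerts {v}).disjUnion (Q.removeVerts {v}) := by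
      refine ext' ?_ ?_
      · show T'.verts \ {v} = T.verts \ {v} ∪ Q.verts \ {v}
        rw [hT'eq]
        show (T.verts ∪ Q.verts) \ {v} = _
        rw [Finset.union_sdiff_distrib]
      · show T'.edges.filter _ = T.edges.filter _ ∪ Q.edges.filter _
        rw [hT'eq]
        show (T.edges ∪ Q.edges).filter _ = _
        rw [Finset.filter_union]
    have hdisj' : Disjoint (T.removeVerts {v}).verts (Q.removeVerts {v}).verts := by
      show Disjoint (T.verts \ {v}) (Q.verts \ {v})
      rw [Finset.disjoint_left]
      intro a ha ha'
      rw [Finset.mem_sdiff] at ha ha'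
      have hin : a ∈ T.verts ∩ Q.verts := Finset.mem_inter.mpr ⟨ha.1, ha'.1⟩
      rw [hmeet, Finset.mem_singleton] at hin
      exact ha.2 (Finset.mem_singleton.mpr hin)
    rw [hT'v, matchPoly_disjUnion (by omega) (removeVerts_wellFormed hwf _)
      (removeVerts_wellFormed hQwf _) (removeVerts_uniform hu _)
      (removeVerts_uniform hQu _) hdisj', hphiQ0']
  · rw [hT'eq]; exact disjUnion_wellFormed hwf hQwf
  · rw [hT'eq]; exact disjUnion_uniform hu hQu
  · rw [hverts]; exact Finset.mem_union_left _ hv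

end FinHypergraph


open FinHypergraph

/-- For an `r`-uniform supertree `T` (`r ≥ 2`), a vertex `v` of `T` and
integers `p ≥ q ≥ 1`,
`φ(T(v;p,q), x) − φ(T(v;p+1,q−1), x)
  = x^(q(r−2)) · ( φ(T(v;p−q,0), x) − φ((T−v) ∪ P_{p−q}^r, x) )`. -/
theorem matchPoly_graft_one_vertex {α : Type*} (r : ℕ) (hr : 2 ≤ r)
    (T : FinHypergraph α) (hT : T.IsSupertree r) (v : α) (hv : v ∈ T.verts)
    (p q : ℕ) (hq1 : 1 ≤ q) (hqp : q ≤ p)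
    (A B C P : FinHypergraph α)
    (hA : IsTwoPathAttach r T v p q A)
    (hB : IsTwoPathAttach r T v (p + 1) (q - 1) B)
    (hC : IsTwoPathAttach r T v (p - q) 0 C)
    (hP : IsLoosePath r (p - q) P)
    (hdisj : Disjoint P.verts (T.removeVerts {v}).verts) :
    ∀ x : ℝ, A.matchPoly r x - B.matchPoly r x
      = x ^ (q * (r - 2)) *
          (C.matchPoly r x - ((T.removeVerts {v}).disjUnion P).matchPoly r x) := by
  classical
  intro x
  obtain ⟨hwfT, huT, -, -⟩ := hT
  set t := T.matchPoly r x with ht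
  set a := (T.removeVerts {v}).matchPoly r x with ha
  set d := dSeq r x with hd
  -- A
  obtain ⟨T1, h1, h2⟩ := hA
  obtain ⟨hphi1, hA1, hwf1, hu1, hv1⟩ := matchPoly_attach hr hwfT huT hv h1 x
  obtain ⟨hphiA, -, -, -, -⟩ := matchPoly_attach hr hwf1 hu1 hv1 h2 x
  rw [hphi1, hA1] at hphiA
  -- B
  obtain ⟨T2, g1, g2⟩ := hB
  obtain ⟨hphi2, hA2, hwf2, hu2, hv2⟩ := matchPoly_attach hr hwfT huT hv g1 x
  obtain ⟨hphiB, -, -, -, -⟩ := matchPoly_attach hr hwf2 hu2 hv2 g2 x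
  rw [hphi2, hA2, show q - 1 + 1 = q from by omega] at hphiB
  -- C
  obtain ⟨T3, c1, c2⟩ := hC
  obtain ⟨hphi3, hA3, hwf3, hu3, hv3⟩ := matchPoly_attach hr hwfT huT hv c1 x
  obtain ⟨hphiC, -, -, -, -⟩ := matchPoly_attach hr hwf3 hu3 hv3 c2 x
  rw [hphi3, hA3, show (0:ℕ) + 1 = 1 from rfl, dSeq_one, dSeq_zero] at hphiC
  -- P
  obtain ⟨wP, hinjP, hPverts, hPedges⟩ := hP
  have hPeq : P = loosePathHG r (p - q) wP := ext' hPverts hPedges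
  have hphiP : P.matchPoly r x = x * d (p - q + 1) - d (p - q) := by
    rw [hPeq, hd]
    exact (loosePath_matchPoly r hr x (p - q) wP hinjP).1
  have hPwf : P.WellFormed := by rw [hPeq]; exact loosePathHG_wellFormed hr wP
  have hPu : P.Uniform r := by rw [hPeq]; exact loosePathHG_uniform hr hinjP
  have hphiTP : ((T.removeVerts {v}).disjUnion P).matchPoly r x
      = a * (x * d (p - q + 1) - d (p - q)) := by
    rw [matchPoly_disjUnion (by omega) (removeVerts_wellFormed hwfT _) hPwf
      (removeVerts_uniform huT _) hPu hdisj.symm, hphiP, ha]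
  -- the determinant identities
  have hI := dSeq_I r x q p hqp
  rw [show p + 1 - q = p - q + 1 from by omega] at hI
  have hII := dSeq_II r x hr hq1 hqp
  rw [pow_succ] at hII
  rw [hphiA, hphiB, hphiC, hphiTP, ← hd] at *
  linear_combination t * hI - a * hII
end
end
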